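/- arXiv:2402.03930 — 5 statements merged into one kernel-verified Lean document; each statement's English description precedes it below -/
import Mathlib

section
/- Let $(T_k)_{k\geq 2}$ be i.i.d. Exp(1) random variables and $(\mathbf{C}_j)_{j\geq 1}$ be i.i.d. Exp($\gamma$) random variables independent of the $T_k$, with $\gamma > 0$. For $n \geq 1$ and $1 \leq m \leq n$, the probability that $\mathbf{C}_j > \sum_{k=j+1}^n T_k$ holds simultaneously for all $j \in \{n-m+1, \ldots, n\}$ equals $\left[\prod_{k=1}^{m-1}(1+k\gamma)\right]^{-1}$. -/
open MeasureTheory ProbabilityTheory Filter Real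

namespace TailRed


variable {Ω : Type*} [MeasureSpace Ω]

lemma iIndepFun_precomp {ι ι' : Type*} {f : ι → Ω → ℝ}
    (e : ι' → ι) (he : Function.Injective e)
    (h : iIndepFun f ℙ) :
    iIndepFun (fun i => f (e i)) ℙ := by
  rw [iIndepFun_iff_measure_inter_preimage_eq_mul] at h ⊢
  intro S sets hsets
  have key := h (S.map ⟨e, he⟩)
    (sets := Function.extend e sets fun _ => Set.univ) ?_
  · have h1 : (⋂ i ∈ S.map ⟨e, he⟩, f i ⁻¹' Function.extend e sets (fun _ => Set.univ) i)
        = ⋂ i ∈ S, (fun i => f (e i)) i ⁻¹' sets i := by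
      ext ω
      simp only [Set.mem_iInter, Finset.mem_map, Function.Embedding.coeFn_mk]
      constructor
      · intro hx i hi
        have := hx (e i) ⟨i, hi, rfl⟩
        rwa [he.extend_apply] at this
      · rintro hx i ⟨i', hi', rfl⟩
        rw [he.extend_apply]
        exact hx i' hi'
    have h2 : (∏ i ∈ S.map ⟨e, he⟩, ℙ (f i ⁻¹' Function.extend e sets (fun _ => Set.univ) i))
        = ∏ i ∈ S, ℙ ((fun i => f (e i)) i ⁻¹' sets i) := by
      rw [Finset.prod_map]
      refine Finset.prod_congr rfl fun i _ => ?_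
      simp [he.extend_apply]
    rw [h1, h2] at key
    exact key
  · intro i hi
    rcases Finset.mem_map.mp hi with ⟨i', hi', rfl⟩
    show MeasurableSet (Function.extend e sets (fun _ => Set.univ) (e i'))
    rw [he.extend_apply]
    exact hsets i' hi'

lemma map_eq_pi {ι : Type*} [Fintype ι] [IsProbabilityMeasure (ℙ : Measure Ω)]
    (g : ι → Ω → ℝ) (hg : ∀ i, Measurable (g i))
    (hind : iIndepFun g ℙ)
    (μ : ι → Measure ℝ) [∀ i, IsProbabilityMeasure (μ i)]
    (hdist : ∀ i, Measure.map (g i) ℙ = μ i) :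
    Measure.map (fun ω i => g i ω) ℙ = Measure.pi μ := by
  refine (Measure.pi_eq fun s hs => ?_).symm
  rw [Measure.map_apply (measurable_pi_lambda _ hg) (MeasurableSet.univ_pi hs)]
  have hpre : (fun ω i => g i ω) ⁻¹' Set.pi Set.univ s = ⋂ i, g i ⁻¹' s i := by
    ext ω; simp [Set.mem_pi]
  rw [hpre, hind.meas_iInter fun i => ⟨s i, hs i, rfl⟩]
  exact Finset.prod_congr rfl fun i _ => by
    rw [← hdist i, Measure.map_apply (hg i) (hs i)]

lemma lintegral_pi_prod : ∀ (n : ℕ) (μ : Fin n → Measure ℝ),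
    (∀ i, SigmaFinite (μ i)) → ∀ (g : Fin n → ℝ → ENNReal), (∀ i, Measurable (g i)) →
    ∫⁻ x, ∏ i, g i (x i) ∂Measure.pi μ = ∏ i, ∫⁻ x, g i x ∂μ i := by
  intro n
  induction n with
  | zero =>
    intro μ _ g _
    simp
  | succ n ih =>
    intro μ hσ g hg
    have := @hσ
    have hmp := (measurePreserving_piFinSuccAbove μ 0).symm
    rw [← hmp.lintegral_comp (f := fun x => ∏ i, g i (x i))
      (by exact Finset.measurable_prod _ fun i _ => (hg i).comp (measurable_pi_apply i))]
    have heq : ∀ y : ℝ × (Fin n → ℝ),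
        (∏ i, g i (((MeasurableEquiv.piFinSuccAbove (fun _ => ℝ) 0).symm y) i))
          = g 0 y.1 * ∏ i : Fin n, g (Fin.succ i) (y.2 i) := by
      intro y
      simp [MeasurableEquiv.piFinSuccAbove, Fin.prod_univ_succ, Fin.zero_succAbove]
    simp_rw [heq]
    rw [lintegral_prod_mul (f := g 0) (g := fun x : Fin n → ℝ => ∏ i : Fin n, g i.succ (x i))
      (hg 0).aemeasurable
      (Finset.measurable_prod _ fun i _ => (hg _).comp (measurable_pi_apply i)).aemeasurable]
    simp_rw [Fin.zero_succAbove]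
    rw [ih _ (fun i => hσ _) _ (fun i => hg _), Fin.prod_univ_succ]



lemma expMeasure_eq (r : ℝ) : expMeasure r = volume.withDensity (exponentialPDF r) := rfl

lemma measurable_exponentialPDF (r : ℝ) : Measurable (exponentialPDF r) := by
  unfold exponentialPDF
  exact (measurable_exponentialPDFReal r).ennreal_ofReal

lemma expMeasure_Ioi {r x : ℝ} (hr : 0 < r) (hx : 0 ≤ x) :
    expMeasure r (Set.Ioi x) = ENNReal.ofReal (exp (-(r * x))) := by
  have : IsProbabilityMeasure (expMeasure r) := isProbabilityMeasure_expMeasure hr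
  have hIic : expMeasure r (Set.Iic x) = ENNReal.ofReal (1 - exp (-(r * x))) := by
    rw [expMeasure_eq, withDensity_apply _ measurableSet_Iic,
      lintegral_exponentialPDF_eq_antiDeriv hr x, if_pos hx]
  have hcompl : Set.Ioi x = (Set.Iic x)ᶜ := Set.compl_Iic.symm
  rw [hcompl, measure_compl measurableSet_Iic (measure_ne_top _ _), hIic, measure_univ]
  have hle : exp (-(r * x)) ≤ 1 := by
    rw [← Real.exp_zero]
    exact Real.exp_le_exp.mpr (by nlinarith)
  rw [← ENNReal.ofReal_one, ← ENNReal.ofReal_sub _ (by linarith)]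
  norm_num

lemma expMeasure_Iio_zero {r : ℝ} : expMeasure r (Set.Iio 0) = 0 := by
  rw [expMeasure_eq, withDensity_apply _ measurableSet_Iio]
  exact lintegral_exponentialPDF_of_nonpos le_rfl

lemma expMeasure_Ici_zero {r : ℝ} (hr : 0 < r) : expMeasure r (Set.Ici 0) = 1 := by
  have : IsProbabilityMeasure (expMeasure r) := isProbabilityMeasure_expMeasure hr
  have : Set.Ici (0:ℝ) = (Set.Iio 0)ᶜ := Set.compl_Iio.symm
  rw [this, measure_compl measurableSet_Iio (measure_ne_top _ _), expMeasure_Iio_zero,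
    measure_univ, tsub_zero]

lemma lintegral_exp_neg_expMeasure {r a : ℝ} (hr : 0 < r) (ha : 0 ≤ a) :
    ∫⁻ x, ENNReal.ofReal (exp (-(a * x))) ∂expMeasure r
      = ENNReal.ofReal (r / (r + a)) := by
  have hra : 0 < r + a := by linarith
  rw [expMeasure_eq, lintegral_withDensity_eq_lintegral_mul _
    (measurable_exponentialPDF r)
    (by fun_prop : Measurable fun x => ENNReal.ofReal (exp (-(a * x))))]
  have hpt : (fun x => exponentialPDF r x * ENNReal.ofReal (exp (-(a * x))))
      = fun x => ENNReal.ofReal (r / (r + a)) * exponentialPDF (r + a) x := by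
    funext x
    by_cases hx : 0 ≤ x
    · rw [exponentialPDF_of_nonneg hx, exponentialPDF_of_nonneg hx,
        ← ENNReal.ofReal_mul (by positivity), ← ENNReal.ofReal_mul (by positivity)]
      congr 1
      have hexp : rexp (-(r * x)) * rexp (-(a * x)) = rexp (-((r + a) * x)) := by
        rw [← Real.exp_add]; ring_nf
      have hd : r / (r + a) * (r + a) = r := by field_simp
      calc r * rexp (-(r * x)) * rexp (-(a * x))
          = r * rexp (-((r + a) * x)) := by rw [mul_assoc, hexp]
        _ = r / (r + a) * ((r + a) * rexp (-((r + a) * x))) := by rw [← mul_assoc, hd]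
    · rw [exponentialPDF_of_neg (lt_of_not_ge hx), exponentialPDF_of_neg (lt_of_not_ge hx)]
      simp
  calc ∫⁻ x, (exponentialPDF r * fun x => ENNReal.ofReal (exp (-(a * x)))) x
      = ∫⁻ x, ENNReal.ofReal (r / (r + a)) * exponentialPDF (r + a) x := by
        refine lintegral_congr fun x => ?_
        have := congrFun hpt x
        simpa using this
    _ = ENNReal.ofReal (r / (r + a)) * ∫⁻ x, exponentialPDF (r + a) x :=
        lintegral_const_mul _ (measurable_exponentialPDF _)
    _ = ENNReal.ofReal (r / (r + a)) := by
        rw [lintegral_exponentialPDF_eq_one hra, mul_one]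

lemma pi_measure_eval (γ : ℝ) (hγ : 0 < γ) (m : ℕ) (hm : 1 ≤ m) :
    Measure.pi (fun i : Fin m ⊕ Fin m =>
        Sum.elim (fun _ : Fin m => expMeasure 1) (fun _ : Fin m => expMeasure γ) i)
      {x | ∀ i : Fin m,
        (∑ l ∈ Finset.univ.filter (fun l : Fin m => l < i), x (Sum.inl l)) < x (Sum.inr i)}
    = ENNReal.ofReal ((∏ k ∈ Finset.Icc 1 (m - 1), (1 + k * γ))⁻¹) := by
  haveI h1 : IsProbabilityMeasure (expMeasure 1) := isProbabilityMeasure_expMeasure one_pos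
  haveI hγ' : IsProbabilityMeasure (expMeasure γ) := isProbabilityMeasure_expMeasure hγ
  set μ : Fin m ⊕ Fin m → Measure ℝ :=
    fun i => Sum.elim (fun _ : Fin m => expMeasure 1) (fun _ : Fin m => expMeasure γ) i with hμ
  haveI : ∀ i, IsProbabilityMeasure (μ i) := by rintro (l | i) <;> simpa [hμ]
  set A : Set ((Fin m ⊕ Fin m) → ℝ) := {x | ∀ i : Fin m,
    (∑ l ∈ Finset.univ.filter (fun l : Fin m => l < i), x (Sum.inl l)) < x (Sum.inr i)} with hA
  have hAmeas : MeasurableSet A := by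
    have : A = ⋂ i : Fin m, {x : (Fin m ⊕ Fin m) → ℝ |
        (∑ l ∈ Finset.univ.filter (fun l : Fin m => l < i), x (Sum.inl l)) < x (Sum.inr i)} := by
      ext x; simp [hA]
    rw [this]
    exact MeasurableSet.iInter fun i => measurableSet_lt
      (Finset.measurable_sum _ fun l _ => measurable_pi_apply (Sum.inl l))
      (measurable_pi_apply (Sum.inr i))
  -- move to product of two pi measures
  have hmp := measurePreserving_sumPiEquivProdPi_symm μ
  rw [← hmp.measure_preimage hAmeas.nullMeasurableSet]
  set B : Set ((Fin m → ℝ) × (Fin m → ℝ)) := {p | ∀ i : Fin m,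
    (∑ l ∈ Finset.univ.filter (fun l : Fin m => l < i), p.1 l) < p.2 i} with hB
  have hpre : (MeasurableEquiv.sumPiEquivProdPi (fun _ : Fin m ⊕ Fin m => ℝ)).symm ⁻¹' A = B := by
    ext p
    simp only [Set.mem_preimage, hA, Set.mem_setOf_eq, hB]
    rfl
  rw [hpre]
  have hBmeas : MeasurableSet B := by
    have : B = ⋂ i : Fin m, {p : (Fin m → ℝ) × (Fin m → ℝ) |
        (∑ l ∈ Finset.univ.filter (fun l : Fin m => l < i), p.1 l) < p.2 i} := by
      ext p; simp [hB]
    rw [this]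
    exact MeasurableSet.iInter fun i => measurableSet_lt
      (by fun_prop) (by fun_prop)
  rw [Measure.prod_apply hBmeas]
  rw [show (fun i : Fin m => μ (Sum.inl i)) = (fun _ : Fin m => expMeasure 1) from rfl,
    show (fun i : Fin m => μ (Sum.inr i)) = (fun _ : Fin m => expMeasure γ) from rfl]
  -- inner measure
  have hinner : ∀ t : Fin m → ℝ, (Prod.mk t ⁻¹' B)
      = Set.pi Set.univ (fun i : Fin m =>
          Set.Ioi (∑ l ∈ Finset.univ.filter (fun l : Fin m => l < i), t l)) := by
    intro t; ext c; simp [hB, Set.mem_pi]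
  have step1 : ∀ t : Fin m → ℝ,
      (Measure.pi fun _ : Fin m => expMeasure γ) (Prod.mk t ⁻¹' B)
        = ∏ i : Fin m, expMeasure γ
            (Set.Ioi (∑ l ∈ Finset.univ.filter (fun l : Fin m => l < i), t l)) := by
    intro t; rw [hinner t, Measure.pi_pi]
  -- the coefficient per coordinate
  set c : Fin m → ℕ := fun l => m - 1 - (l : ℕ) with hc
  have hcard : ∀ l : Fin m, (Finset.univ.filter (fun i : Fin m => l < i)).card = c l := by
    intro l
    have : Finset.univ.filter (fun i : Fin m => l < i) = Finset.Ioi l := by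
      ext i; simp
    rw [this, Fin.card_Ioi]
  -- a.e. nonnegativity
  have hae : ∀ᵐ t ∂(Measure.pi fun _ : Fin m => expMeasure 1),
      t ∈ Set.pi Set.univ (fun _ : Fin m => Set.Ici (0:ℝ)) := by
    have hfull : (Measure.pi fun _ : Fin m => expMeasure 1)
        (Set.pi Set.univ fun _ : Fin m => Set.Ici (0:ℝ)) = 1 := by
      rw [Measure.pi_pi]
      simp [expMeasure_Ici_zero one_pos]
    haveI : IsProbabilityMeasure (Measure.pi fun _ : Fin m => expMeasure 1) := inferInstance
    rw [ae_iff]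
    have : {t : Fin m → ℝ | ¬ t ∈ Set.pi Set.univ fun _ : Fin m => Set.Ici (0:ℝ)}
        = (Set.pi Set.univ fun _ : Fin m => Set.Ici (0:ℝ))ᶜ := rfl
    rw [this, measure_compl (MeasurableSet.univ_pi fun _ => measurableSet_Ici)
      (measure_ne_top _ _), hfull, measure_univ, tsub_self]
  -- rewrite the integrand a.e.
  have hcongr : ∫⁻ t, (Measure.pi fun _ : Fin m => expMeasure γ) (Prod.mk t ⁻¹' B)
        ∂(Measure.pi fun _ : Fin m => expMeasure 1)
      = ∫⁻ t, ∏ l : Fin m, ENNReal.ofReal (exp (-((γ * (c l : ℝ)) * t l)))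
        ∂(Measure.pi fun _ : Fin m => expMeasure 1) := by
    refine lintegral_congr_ae ?_
    filter_upwards [hae] with t ht
    have ht' : ∀ l, 0 ≤ t l := fun l => ht l (Set.mem_univ l)
    rw [step1 t]
    have hS : ∀ i : Fin m, 0 ≤ ∑ l ∈ Finset.univ.filter (fun l : Fin m => l < i), t l :=
      fun i => Finset.sum_nonneg fun l _ => ht' l
    calc ∏ i : Fin m, expMeasure γ
            (Set.Ioi (∑ l ∈ Finset.univ.filter (fun l : Fin m => l < i), t l))
        = ∏ i : Fin m, ENNReal.ofReal
            (exp (-(γ * ∑ l ∈ Finset.univ.filter (fun l : Fin m => l < i), t l))) := by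
          exact Finset.prod_congr rfl fun i _ => expMeasure_Ioi hγ (hS i)
      _ = ENNReal.ofReal (exp (∑ i : Fin m,
            -(γ * ∑ l ∈ Finset.univ.filter (fun l : Fin m => l < i), t l))) := by
          rw [Real.exp_sum, ENNReal.ofReal_prod_of_nonneg fun i _ => (exp_pos _).le]
      _ = ENNReal.ofReal (exp (∑ l : Fin m, -((γ * (c l : ℝ)) * t l))) := by
          congr 1
          congr 1
          rw [Finset.sum_neg_distrib, Finset.sum_neg_distrib]
          congr 1
          calc ∑ i : Fin m, γ * ∑ l ∈ Finset.univ.filter (fun l : Fin m => l < i), t l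
              = ∑ i : Fin m, ∑ l : Fin m, if l < i then γ * t l else 0 := by
                refine Finset.sum_congr rfl fun i _ => ?_
                rw [Finset.mul_sum, Finset.sum_filter]
            _ = ∑ l : Fin m, ∑ i : Fin m, if l < i then γ * t l else 0 := Finset.sum_comm
            _ = ∑ l : Fin m, (γ * (c l : ℝ)) * t l := by
                refine Finset.sum_congr rfl fun l _ => ?_
                rw [← Finset.sum_filter, Finset.sum_const, nsmul_eq_mul, hcard l]
                ring
      _ = ∏ l : Fin m, ENNReal.ofReal (exp (-((γ * (c l : ℝ)) * t l))) := by
          rw [Real.exp_sum, ENNReal.ofReal_prod_of_nonneg fun i _ => (exp_pos _).le]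
  rw [hcongr]
  rw [lintegral_pi_prod m (fun _ => expMeasure 1) (fun _ => inferInstance)
    (fun l x => ENNReal.ofReal (exp (-((γ * (c l : ℝ)) * x))))
    (fun l => by fun_prop)]
  have hval : ∀ l : Fin m, ∫⁻ x, ENNReal.ofReal (exp (-((γ * (c l : ℝ)) * x))) ∂expMeasure 1
      = ENNReal.ofReal ((1 + γ * (c l : ℝ))⁻¹) := by
    intro l
    rw [lintegral_exp_neg_expMeasure one_pos (by positivity)]
    rw [one_div]
  rw [Finset.prod_congr rfl fun l _ => hval l]
  rw [← ENNReal.ofReal_prod_of_nonneg fun l _ => by positivity]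
  congr 1
  have hprod : ∏ l : Fin m, (1 + γ * ((c l : ℕ) : ℝ))
      = ∏ k ∈ Finset.Icc 1 (m - 1), (1 + (k : ℝ) * γ) := by
    have h1 : ∏ l : Fin m, (1 + γ * ((c l : ℕ) : ℝ))
        = ∏ l ∈ Finset.range m, (1 + γ * ((m - 1 - l : ℕ) : ℝ)) :=
      Fin.prod_univ_eq_prod_range (fun l => (1 + γ * ((m - 1 - l : ℕ) : ℝ))) m
    rw [h1, Finset.prod_range_reflect (fun k => (1 + γ * (k : ℝ))) m]
    have hm1 : m = (m - 1) + 1 := by omega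
    rw [hm1, Finset.prod_range_succ']
    have h2 : Finset.Icc 1 (m - 1 + 1 - 1) = Finset.Ico 1 (m - 1 + 1) := by
      rw [Finset.Ico_add_one_right_eq_Icc]; norm_num
    rw [h2, Finset.prod_Ico_eq_prod_range]
    simp only [Nat.cast_zero, mul_zero, add_zero, mul_one]
    refine Finset.prod_congr (by congr 1) fun i _ => ?_
    push_cast
    ring
  rw [← hprod, Finset.prod_inv_distrib]


lemma A_measurable (m : ℕ) : MeasurableSet {x : (Fin m ⊕ Fin m) → ℝ | ∀ i : Fin m,
    (∑ l ∈ Finset.univ.filter (fun l : Fin m => l < i), x (Sum.inl l)) < x (Sum.inr i)} := by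
  have : {x : (Fin m ⊕ Fin m) → ℝ | ∀ i : Fin m,
      (∑ l ∈ Finset.univ.filter (fun l : Fin m => l < i), x (Sum.inl l)) < x (Sum.inr i)}
      = ⋂ i : Fin m, {x : (Fin m ⊕ Fin m) → ℝ |
        (∑ l ∈ Finset.univ.filter (fun l : Fin m => l < i), x (Sum.inl l)) < x (Sum.inr i)} := by
    ext x; simp
  rw [this]
  exact MeasurableSet.iInter fun i => measurableSet_lt
    (Finset.measurable_sum _ fun l _ => measurable_pi_apply (Sum.inl l))
    (measurable_pi_apply (Sum.inr i))

end TailRed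

open TailRed

/-- Distribution of the tail red cluster in FPP with recovery on the semi-line:
`ℙ(Ĥ_n ≥ m) = ∏_{k=1}^{m-1} (1+kγ)⁻¹`, where the event `{Ĥ_n ≥ m}` means that
`C_j > ∑_{k=j+1}^n T_k` for all `j ∈ {n-m+1, …, n}`. The passage times `T` are
i.i.d. Exp(1), the recovery clocks `C` are i.i.d. Exp(γ), all independent. -/
theorem tail_red_cluster_distribution
    {Ω : Type*} [MeasureSpace Ω] [IsProbabilityMeasure (ℙ : Measure Ω)]
    (γ : ℝ) (hγ : 0 < γ)
    (T : ℕ → Ω → ℝ) (C : ℕ → Ω → ℝ)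
    (hTmeas : ∀ k, Measurable (T k)) (hCmeas : ∀ j, Measurable (C j))
    (hindep : iIndepFun
      (Sum.elim T C : ℕ ⊕ ℕ → Ω → ℝ) ℙ)
    (hTdist : ∀ k, Measure.map (T k) ℙ = expMeasure 1)
    (hCdist : ∀ j, Measure.map (C j) ℙ = expMeasure γ)
    (n m : ℕ) (hm : 1 ≤ m) (hmn : m ≤ n) :
    ℙ {ω | ∀ j ∈ Finset.Icc (n - m + 1) n,
        (∑ k ∈ Finset.Icc (j + 1) n, T k ω) < C j ω}
      = ENNReal.ofReal ((∏ k ∈ Finset.Icc 1 (m - 1), (1 + k * γ))⁻¹) := by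
  classical
  set e : Fin m ⊕ Fin m → ℕ ⊕ ℕ :=
    Sum.map (fun l : Fin m => n - (l : ℕ)) (fun i : Fin m => n - (i : ℕ)) with he_def
  have he : Function.Injective e := by
    rintro (a | a) (b | b) h
    · simp only [he_def, Sum.map_inl, Sum.inl.injEq] at h
      have ha := a.isLt; have hb := b.isLt
      exact congrArg Sum.inl (Fin.ext (by omega))
    · simp only [he_def, Sum.map_inl, Sum.map_inr, reduceCtorEq] at h
    · simp only [he_def, Sum.map_inl, Sum.map_inr, reduceCtorEq] at h
    · simp only [he_def, Sum.map_inr, Sum.inr.injEq] at h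
      have ha := a.isLt; have hb := b.isLt
      exact congrArg Sum.inr (Fin.ext (by omega))
  set g : Fin m ⊕ Fin m → Ω → ℝ := fun i => Sum.elim T C (e i) with hg_def
  have hgmeas : ∀ i, Measurable (g i) := by
    rintro (l | i)
    · simpa [hg_def, he_def] using hTmeas (n - (l:ℕ))
    · simpa [hg_def, he_def] using hCmeas (n - (i:ℕ))
  have hgind : iIndepFun g ℙ := iIndepFun_precomp e he hindep
  set μ : Fin m ⊕ Fin m → Measure ℝ :=
    fun i => Sum.elim (fun _ : Fin m => expMeasure 1) (fun _ : Fin m => expMeasure γ) i with hμ_def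
  haveI : ∀ i, IsProbabilityMeasure (μ i) := by
    rintro (l | i)
    · exact isProbabilityMeasure_expMeasure one_pos
    · exact isProbabilityMeasure_expMeasure hγ
  have hgdist : ∀ i, Measure.map (g i) ℙ = μ i := by
    rintro (l | i)
    · simpa [hg_def, he_def, hμ_def] using hTdist (n - (l:ℕ))
    · simpa [hg_def, he_def, hμ_def] using hCdist (n - (i:ℕ))
  have hmap := map_eq_pi g hgmeas hgind μ hgdist
  set A : Set ((Fin m ⊕ Fin m) → ℝ) := {x | ∀ i : Fin m,
    (∑ l ∈ Finset.univ.filter (fun l : Fin m => l < i), x (Sum.inl l)) < x (Sum.inr i)}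
    with hA_def
  have key : ∀ (i : Fin m) (ω : Ω),
      (∑ k ∈ Finset.Icc (n - (i:ℕ) + 1) n, T k ω)
        = ∑ l ∈ Finset.univ.filter (fun l : Fin m => l < i), T (n - (l:ℕ)) ω := by
    intro i ω
    have him := i.isLt
    refine Finset.sum_bij' (i := fun k hk => (⟨n - k, ?_⟩ : Fin m))
      (j := fun (l : Fin m) _ => n - (l : ℕ)) ?_ ?_ ?_ ?_ ?_
    · have hk' := Finset.mem_Icc.mp hk; omega
    · intro k hk
      have hk' := Finset.mem_Icc.mp hk
      simp only [Finset.mem_filter, Finset.mem_univ, true_and, Fin.lt_def]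
      omega
    · intro l hl
      have hl' : (l : ℕ) < (i : ℕ) := by
        have := (Finset.mem_filter.mp hl).2
        exact this
      have hln := l.isLt
      beta_reduce
      exact Finset.mem_Icc.mpr (by omega)
    · intro k hk
      have hk' := Finset.mem_Icc.mp hk
      show n - (n - k) = k
      omega
    · intro l hl
      have hln := l.isLt
      exact Fin.ext (show n - (n - (l : ℕ)) = (l : ℕ) by omega)
    · intro k hk
      have hk' := Finset.mem_Icc.mp hk
      have hkk : n - (n - k) = k := by omega
      show T k ω = T (n - (n - k)) ω
      rw [hkk]
  have hset : {ω | ∀ j ∈ Finset.Icc (n - m + 1) n,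
      (∑ k ∈ Finset.Icc (j + 1) n, T k ω) < C j ω}
      = (fun ω (i : Fin m ⊕ Fin m) => g i ω) ⁻¹' A := by
    ext ω
    simp only [Set.mem_setOf_eq, Set.mem_preimage, hA_def, hg_def, he_def,
      Sum.map_inl, Sum.map_inr, Sum.elim_inl, Sum.elim_inr]
    constructor
    · intro h i
      rw [← key i ω]
      exact h (n - (i:ℕ)) (Finset.mem_Icc.mpr (by have := i.isLt; omega))
    · intro h j hj
      have hj' := Finset.mem_Icc.mp hj
      have hpf : n - j < m := by omega
      have hnj : j = n - ((⟨n - j, hpf⟩ : Fin m) : ℕ) := by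
        show j = n - (n - j); omega
      rw [hnj, key ⟨n - j, hpf⟩ ω]
      exact h ⟨n - j, hpf⟩
  rw [hset, ← Measure.map_apply (measurable_pi_lambda _ hgmeas) (A_measurable m), hmap]
  exact pi_measure_eval γ hγ m hm
end

section
/- Let $\gamma>0$ and let $(\widehat{H}_n)_{n\geq 1}$ be a sequence of $\mathbb{N}$-valued random variables with $\P(\widehat{H}_n \geq m) = \prod_{k=1}^{m-1}(1+k\gamma)^{-1}$ for all $0 \leq m \leq n$ (and $\widehat{H}_n \leq n$), such that for any $r \in (0,1)$, $s \in (1, 1/r)$, and $n$ large enough, the events $\{\widehat{H}_{\lfloor n^s \rfloor} \geq \lceil r \log \lfloor n^s\rfloor / \log\log \lfloor n^s\rfloor \rceil\}$ are independent across $n$. Then almost surely $\limsup_{n\to\infty} \widehat{H}_n \log\log n / \log n = 1$. -/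
open MeasureTheory ProbabilityTheory Filter Real Topology
open scoped ENNReal NNReal


lemma sum_log_upper (M : ℕ) :
    ∑ k ∈ Finset.Icc 1 M, Real.log k ≤ (M : ℝ) * Real.log M := by
  have h : ∀ k ∈ Finset.Icc 1 M, Real.log k ≤ Real.log M := by
    intro k hk
    simp only [Finset.mem_Icc] at hk
    exact Real.log_le_log (by exact_mod_cast hk.1) (by exact_mod_cast hk.2)
  calc ∑ k ∈ Finset.Icc 1 M, Real.log k ≤ ∑ _k ∈ Finset.Icc 1 M, Real.log M :=
        Finset.sum_le_sum h
    _ = (M : ℝ) * Real.log M := by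
        rw [Finset.sum_const, Nat.card_Icc]; simp [nsmul_eq_mul]

lemma sum_log_lower (M : ℕ) :
    (M : ℝ) * Real.log M - M ≤ ∑ k ∈ Finset.Icc 1 M, Real.log k := by
  induction M with
  | zero => simp
  | succ M ih =>
    rw [Finset.sum_Icc_succ_top (by omega : 1 ≤ M + 1)]
    have key : ((M:ℝ)+1) * Real.log (M+1) - ((M:ℝ)+1)
        ≤ ((M:ℝ) * Real.log M - M) + Real.log (M+1) := by
      rcases Nat.eq_zero_or_pos M with rfl | hM
      · simp
      · have hMpos : (0:ℝ) < M := by exact_mod_cast hM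
        have h1 : Real.log ((M:ℝ)+1) ≤ Real.log M + 1/M := by
          have : ((M:ℝ)+1) = (M:ℝ) * (1 + 1/M) := by field_simp
          rw [this, Real.log_mul (ne_of_gt hMpos) (by positivity)]
          have := Real.log_le_sub_one_of_pos (show (0:ℝ) < 1 + 1/M by positivity)
          linarith
        have h2 : (M:ℝ) * Real.log ((M:ℝ)+1) ≤ (M:ℝ) * Real.log M + 1 := by
          have h3 := mul_le_mul_of_nonneg_left h1 hMpos.le
          have h4 : (M:ℝ) * (Real.log M + 1/M) = (M:ℝ) * Real.log M + 1 := by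
            field_simp
          linarith
        linarith
    push_cast
    push_cast at ih
    linarith


section
variable {γ : ℝ}

lemma Pi_pos (hγ : 0 < γ) (M : ℕ) : 0 < ∏ k ∈ Finset.Icc 1 M, (1 + (k : ℝ) * γ) := by
  apply Finset.prod_pos
  intro k hk
  simp only [Finset.mem_Icc] at hk
  have : (0:ℝ) ≤ (k:ℝ) * γ := by positivity
  linarith

lemma log_Pi_eq (hγ : 0 < γ) (M : ℕ) :
    Real.log (∏ k ∈ Finset.Icc 1 M, (1 + (k : ℝ) * γ))
      = ∑ k ∈ Finset.Icc 1 M, Real.log (1 + (k : ℝ) * γ) := by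
  apply Real.log_prod
  intro k hk
  have : (0:ℝ) ≤ (k:ℝ) * γ := by positivity
  intro h; linarith

lemma log_Pi_lower (hγ : 0 < γ) (M : ℕ) :
    (M : ℝ) * (Real.log M + Real.log γ - 1)
      ≤ Real.log (∏ k ∈ Finset.Icc 1 M, (1 + (k : ℝ) * γ)) := by
  rw [log_Pi_eq hγ]
  have h1 : ∀ k ∈ Finset.Icc 1 M, Real.log k + Real.log γ ≤ Real.log (1 + (k : ℝ) * γ) := by
    intro k hk
    simp only [Finset.mem_Icc] at hk
    have hk1 : (1:ℝ) ≤ (k:ℝ) := by exact_mod_cast hk.1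
    rw [← Real.log_mul (by linarith) (ne_of_gt hγ)]
    apply Real.log_le_log (by positivity)
    nlinarith
  have h2 := Finset.sum_le_sum h1
  rw [Finset.sum_add_distrib, Finset.sum_const, Nat.card_Icc] at h2
  have h3 := sum_log_lower M
  simp only [Nat.add_sub_cancel, nsmul_eq_mul] at h2
  nlinarith [h2, h3]

lemma log_Pi_upper (hγ : 0 < γ) (M : ℕ) :
    Real.log (∏ k ∈ Finset.Icc 1 M, (1 + (k : ℝ) * γ))
      ≤ (M : ℝ) * (Real.log M + Real.log (1 + γ)) := by
  rw [log_Pi_eq hγ]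
  have h1 : ∀ k ∈ Finset.Icc 1 M, Real.log (1 + (k : ℝ) * γ) ≤ Real.log k + Real.log (1 + γ) := by
    intro k hk
    simp only [Finset.mem_Icc] at hk
    have hk1 : (1:ℝ) ≤ (k:ℝ) := by exact_mod_cast hk.1
    rw [← Real.log_mul (by linarith) (by positivity : (1:ℝ)+γ ≠ 0)]
    apply Real.log_le_log (by positivity)
    nlinarith
  have h2 := Finset.sum_le_sum h1
  rw [Finset.sum_add_distrib, Finset.sum_const, Nat.card_Icc] at h2
  have h3 := sum_log_upper M
  simp only [Nat.add_sub_cancel, nsmul_eq_mul] at h2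
  nlinarith [h2, h3]

end

lemma log_div_self_tendsto : Tendsto (fun t : ℝ => Real.log t / t) atTop (𝓝 0) := by
  simpa using Real.tendsto_pow_log_div_mul_add_atTop 1 0 1 one_ne_zero

lemma self_div_log_tendsto : Tendsto (fun t : ℝ => t / Real.log t) atTop atTop := by
  rw [tendsto_atTop]
  intro M
  set M' : ℝ := max M 1 with hM'
  have hM'pos : 0 < M' := lt_of_lt_of_le one_pos (le_max_right _ _)
  have h1 : ∀ᶠ t : ℝ in atTop, Real.log t / t < 1 / M' :=
    log_div_self_tendsto.eventually_lt_const (by positivity)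
  filter_upwards [h1, eventually_gt_atTop (3:ℝ),
    Real.tendsto_log_atTop.eventually_gt_atTop 0] with t ht ht3 hlog
  have htpos : 0 < t := by linarith
  have h2 : M' * Real.log t ≤ t := by
    rw [div_lt_div_iff₀ htpos hM'pos] at ht
    nlinarith
  have : M' ≤ t / Real.log t := by
    rw [le_div_iff₀ hlog]; linarith
  exact le_trans (le_max_left _ _) this

lemma key_tendsto (a c : ℝ) (ha : 0 < a) :
    Tendsto (fun n : ℕ =>
      ((⌈a * Real.log n / Real.log (Real.log n)⌉₊ : ℝ) - 1) *
        (Real.log ((⌈a * Real.log n / Real.log (Real.log n)⌉₊ : ℝ) - 1) + c)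
        / Real.log n) atTop (𝓝 a) := by
  set L : ℕ → ℝ := fun n => Real.log n with hLdef
  set LL : ℕ → ℝ := fun n => Real.log (L n) with hLLdef
  set x : ℕ → ℝ := fun n => a * L n / LL n with hxdef
  set y : ℕ → ℝ := fun n => (⌈x n⌉₊ : ℝ) - 1 with hydef
  set q : ℕ → ℝ := fun n => y n / x n with hqdef
  have hL : Tendsto L atTop atTop :=
    Real.tendsto_log_atTop.comp tendsto_natCast_atTop_atTop
  have hLL : Tendsto LL atTop atTop := Real.tendsto_log_atTop.comp hL
  have hx : Tendsto x atTop atTop := by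
    have h1 : Tendsto (fun n => L n / LL n) atTop atTop := self_div_log_tendsto.comp hL
    have := h1.const_mul_atTop ha
    simpa [hxdef, mul_div_assoc] using this
  have ev1 : ∀ᶠ n : ℕ in atTop, 1 < L n := hL.eventually_gt_atTop 1
  have ev2 : ∀ᶠ n : ℕ in atTop, 2 ≤ x n := hx.eventually_ge_atTop 2
  have hqbnd : ∀ᶠ n : ℕ in atTop, 1 - 1 / x n ≤ q n ∧ q n ≤ 1 := by
    filter_upwards [ev2] with n hx2
    have hx0 : (0:ℝ) < x n := by linarith
    have hyl : x n - 1 ≤ y n := by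
      have := Nat.le_ceil (x n); simp only [hydef]; linarith
    have hyu : y n ≤ x n := by
      have := Nat.ceil_lt_add_one (le_of_lt hx0); simp only [hydef]; linarith
    constructor
    · rw [hqdef]
      have h : (x n - 1) / x n ≤ y n / x n := by gcongr
      calc 1 - 1 / x n = (x n - 1) / x n := by field_simp
        _ ≤ y n / x n := h
    · rw [hqdef, div_le_one hx0]; exact hyu
  have hq1 : Tendsto q atTop (𝓝 1) := by
    have hlow : Tendsto (fun n => 1 - 1 / x n) atTop (𝓝 1) := by
      have := hx.inv_tendsto_atTop
      have h2 : Tendsto (fun n => 1 - (x n)⁻¹) atTop (𝓝 (1 - 0)) :=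
        tendsto_const_nhds.sub this
      simpa [one_div] using h2
    exact tendsto_of_tendsto_of_tendsto_of_le_of_le' hlow tendsto_const_nhds
      (hqbnd.mono fun n h => h.1) (hqbnd.mono fun n h => h.2)
  have hlogq : Tendsto (fun n => Real.log (q n)) atTop (𝓝 0) := by
    have h1 : Tendsto Real.log (𝓝 1) (𝓝 0) := by
      simpa using (Real.continuousAt_log one_ne_zero).tendsto
    exact h1.comp hq1
  have t1 : Tendsto (fun n => (Real.log (q n) + Real.log a + c) / LL n) atTop (𝓝 0) := by
    apply Tendsto.div_atTop _ hLL
    · exact 0 + Real.log a + c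
    · exact (hlogq.add tendsto_const_nhds).add tendsto_const_nhds
  have t2 : Tendsto (fun n => Real.log (LL n) / LL n) atTop (𝓝 0) :=
    log_div_self_tendsto.comp hLL
  have hA : Tendsto
      (fun n => a + a * ((Real.log (q n) + Real.log a + c) / LL n)
        - a * (Real.log (LL n) / LL n)) atTop (𝓝 a) := by
    have h0 : Tendsto (fun _ : ℕ => a) atTop (𝓝 a) := tendsto_const_nhds
    have := (h0.add (t1.const_mul a)).sub (t2.const_mul a)
    simpa using this
  have hfinal : Tendsto
      (fun n => q n * (a + a * ((Real.log (q n) + Real.log a + c) / LL n)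
        - a * (Real.log (LL n) / LL n))) atTop (𝓝 a) := by
    have := hq1.mul hA
    simpa using this
  apply hfinal.congr'
  filter_upwards [ev1, ev2] with n hL1 hx2
  have hL0 : (0:ℝ) < L n := by linarith
  have hLL0 : (0:ℝ) < LL n := Real.log_pos hL1
  have hx0 : (0:ℝ) < x n := by linarith
  have hy1 : (1:ℝ) ≤ y n := by
    have := Nat.le_ceil (x n); simp only [hydef]; linarith
  have hy0 : (0:ℝ) < y n := by linarith
  have hq0 : (0:ℝ) < q n := div_pos hy0 hx0
  have hyq : y n = q n * x n := by
    rw [hqdef]; field_simp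
  have hlogx : Real.log (x n) = Real.log a + LL n - Real.log (LL n) := by
    rw [hxdef]
    rw [Real.log_div (by positivity) hLL0.ne', Real.log_mul ha.ne' hL0.ne']
  have hlogy : Real.log (y n) = Real.log (q n) + (Real.log a + LL n - Real.log (LL n)) := by
    rw [hyq, Real.log_mul hq0.ne' hx0.ne', hlogx]
  show q n * _ = y n * (Real.log (y n) + c) / L n
  rw [hlogy, hyq, hxdef]
  have hLne : L n ≠ 0 := hL0.ne'
  have hLLne : LL n ≠ 0 := hLL0.ne'
  field_simp
  ring

lemma step_upper {Ω : Type*} [MeasureSpace Ω] [IsProbabilityMeasure (ℙ : Measure Ω)]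
    (γ : ℝ) (hγ : 0 < γ) (H : ℕ → Ω → ℕ)
    (hdist : ∀ n, 1 ≤ n → ∀ m ≤ n,
      ℙ {ω | m ≤ H n ω}
        = ENNReal.ofReal ((∏ k ∈ Finset.Icc 1 (m - 1), (1 + (k : ℝ) * γ))⁻¹))
    (a : ℝ) (ha : 1 < a) :
    ∀ᵐ ω ∂ℙ, ∀ᶠ n in atTop,
      (H n ω : ℝ) * Real.log (Real.log n) / Real.log n ≤ a := by
  set L : ℕ → ℝ := fun n => Real.log n with hLdef
  set LL : ℕ → ℝ := fun n => Real.log (L n) with hLLdef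
  set x : ℕ → ℝ := fun n => a * L n / LL n with hxdef
  set m : ℕ → ℕ := fun n => ⌈x n⌉₊ with hmdef
  set A : ℕ → Set Ω := fun n => {ω | m n ≤ H n ω} with hAdef
  set b : ℝ := (1 + a) / 2 with hbdef
  have hb1 : 1 < b := by rw [hbdef]; linarith
  have hba : b < a := by rw [hbdef]; linarith
  have ha0 : 0 < a := by linarith
  have hL : Tendsto L atTop atTop :=
    Real.tendsto_log_atTop.comp tendsto_natCast_atTop_atTop
  have hLL : Tendsto LL atTop atTop := Real.tendsto_log_atTop.comp hL
  have hx : Tendsto x atTop atTop := by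
    have h1 : Tendsto (fun n => L n / LL n) atTop atTop := self_div_log_tendsto.comp hL
    have := h1.const_mul_atTop ha0
    simpa [hxdef, mul_div_assoc] using this
  have e1 : ∀ᶠ n : ℕ in atTop, 1 < L n := hL.eventually_gt_atTop 1
  have e2 : ∀ᶠ n : ℕ in atTop, 2 ≤ x n := hx.eventually_ge_atTop 2
  have e3 : ∀ᶠ n : ℕ in atTop,
      b ≤ ((m n : ℝ) - 1) * (Real.log ((m n : ℝ) - 1) + (Real.log γ - 1)) / L n :=
    (key_tendsto a (Real.log γ - 1) ha0).eventually_const_le hba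
  have e4 : ∀ᶠ n : ℕ in atTop, a ≤ LL n := hLL.eventually_ge_atTop a
  -- eventual bound on the measure of `A n`
  have ev : ∀ᶠ n : ℕ in atTop, ℙ (A n) ≤ ENNReal.ofReal ((n : ℝ) ^ (-b)) := by
    filter_upwards [e1, e2, e3, e4, eventually_ge_atTop 1] with n hL1 hx2 hkey hLLa hn1
    have hL0 : (0:ℝ) < L n := by linarith
    have hLL0 : (0:ℝ) < LL n := Real.log_pos hL1
    have hn0 : (0:ℝ) < (n:ℝ) := by exact_mod_cast hn1
    have hxm : x n ≤ (m n : ℝ) := Nat.le_ceil _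
    have hm2 : 2 ≤ m n := by exact_mod_cast le_trans hx2 hxm
    have hmn : m n ≤ n := by
      have hxL : x n ≤ L n := by
        rw [hxdef]
        rw [div_le_iff₀ hLL0]
        nlinarith
      have h5 : (m n : ℝ) < x n + 1 := Nat.ceil_lt_add_one (by linarith)
      have h6 : L n ≤ (n:ℝ) - 1 := by
        have := Real.log_le_sub_one_of_pos hn0
        simpa [hLdef] using this
      have : (m n : ℝ) ≤ (n : ℝ) := by linarith
      exact_mod_cast this
    have hPeq := hdist n hn1 (m n) hmn
    have hMcast : ((m n - 1 : ℕ) : ℝ) = (m n : ℝ) - 1 := by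
      have : 1 ≤ m n := by omega
      push_cast [this]; ring
    set M : ℕ := m n - 1 with hMdef
    have hPpos := Pi_pos hγ M
    have hlow := log_Pi_lower hγ M
    rw [hMcast] at hlow
    have hkey2 : b * L n ≤ ((m n : ℝ) - 1) * (Real.log ((m n:ℝ) - 1) + (Real.log γ - 1)) := by
      rw [le_div_iff₀ hL0] at hkey
      linarith
    have hlogP : b * L n ≤ Real.log (∏ k ∈ Finset.Icc 1 M, (1 + (k : ℝ) * γ)) := by
      have : ((m n : ℝ) - 1) * (Real.log ((m n:ℝ) - 1) + Real.log γ - 1)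
          = ((m n : ℝ) - 1) * (Real.log ((m n:ℝ) - 1) + (Real.log γ - 1)) := by ring
      linarith [hlow]
    have hPge : (n : ℝ) ^ (b:ℝ) ≤ ∏ k ∈ Finset.Icc 1 M, (1 + (k : ℝ) * γ) := by
      have h7 : Real.exp (b * L n) ≤ Real.exp (Real.log (∏ k ∈ Finset.Icc 1 M, (1 + (k : ℝ) * γ))) :=
        Real.exp_le_exp.2 hlogP
      rw [Real.exp_log hPpos] at h7
      rw [Real.rpow_def_of_pos hn0]
      rw [mul_comm] at h7
      exact h7
    have hinv : (∏ k ∈ Finset.Icc 1 M, (1 + (k : ℝ) * γ))⁻¹ ≤ (n : ℝ) ^ (-b) := by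
      rw [Real.rpow_neg hn0.le]
      exact inv_anti₀ (by positivity) hPge
    calc ℙ (A n) = ENNReal.ofReal ((∏ k ∈ Finset.Icc 1 M, (1 + (k : ℝ) * γ))⁻¹) := hPeq
      _ ≤ ENNReal.ofReal ((n : ℝ) ^ (-b)) := ENNReal.ofReal_le_ofReal hinv
  -- summability
  obtain ⟨N, hN⟩ := eventually_atTop.1 ev
  have hsummable : Summable (fun n : ℕ => (n : ℝ) ^ (-b)) :=
    Real.summable_nat_rpow.2 (by linarith)
  have htop : (∑' n, ℙ (A n)) ≠ ⊤ := by
    have hle : ∀ n, ℙ (A n) ≤ ENNReal.ofReal ((n : ℝ) ^ (-b)) + (if n < N then 1 else 0) := by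
      intro n
      rcases lt_or_ge n N with h | h
      · simp only [h, if_true]
        calc ℙ (A n) ≤ 1 := prob_le_one
          _ ≤ ENNReal.ofReal ((n : ℝ) ^ (-b)) + 1 := le_add_self
      · simp only [not_lt.2 h, if_false, add_zero]
        exact hN n h
    have h8 : (∑' n, ℙ (A n))
        ≤ (∑' n : ℕ, ENNReal.ofReal ((n : ℝ) ^ (-b))) + ∑' n : ℕ, (if n < N then (1:ℝ≥0∞) else 0) := by
      calc (∑' n, ℙ (A n))
          ≤ ∑' n : ℕ, (ENNReal.ofReal ((n : ℝ) ^ (-b)) + (if n < N then (1:ℝ≥0∞) else 0)) :=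
            ENNReal.tsum_le_tsum hle
        _ = _ := ENNReal.tsum_add
    have h9 : (∑' n : ℕ, ENNReal.ofReal ((n : ℝ) ^ (-b))) ≠ ⊤ := by
      have h := ENNReal.tsum_coe_ne_top_iff_summable.2 hsummable.toNNReal
      simpa [ENNReal.ofReal] using h
    have h10 : (∑' n : ℕ, (if n < N then (1:ℝ≥0∞) else 0)) ≠ ⊤ := by
      have heq : (∑' n : ℕ, (if n < N then (1:ℝ≥0∞) else 0))
          = ∑ n ∈ Finset.range N, (if n < N then (1:ℝ≥0∞) else 0) := by
        apply tsum_eq_sum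
        intro n hn
        simp only [Finset.mem_range, not_lt] at hn
        simp [not_lt.2 hn]
      rw [heq]
      exact (ENNReal.sum_lt_top.2 fun i _ => by split <;> simp).ne
    exact ne_top_of_le_ne_top (ENNReal.add_ne_top.2 ⟨h9, h10⟩) h8
  have hlimsup : ℙ (limsup A atTop) = 0 := measure_limsup_atTop_eq_zero htop
  have hae : ∀ᵐ ω ∂ℙ, ω ∉ limsup A atTop := measure_eq_zero_iff_ae_notMem.1 hlimsup
  filter_upwards [hae] with ω hω
  have h' : ∀ᶠ n in atTop, ω ∉ A n := by
    rw [← Filter.not_frequently]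
    exact fun hc => hω (mem_limsup_iff_frequently_mem.2 hc)
  filter_upwards [h', e1, e2] with n hn hL1 hx2
  have hL0 : (0:ℝ) < L n := by linarith
  have hLL0 : (0:ℝ) < LL n := Real.log_pos hL1
  have hHm : H n ω < m n := by
    by_contra hc
    exact hn (not_lt.1 hc)
  have hHx : (H n ω : ℝ) ≤ x n := by
    have h1 : (H n ω : ℝ) ≤ (m n : ℝ) - 1 := by
      have : H n ω + 1 ≤ m n := hHm
      have := (Nat.cast_le (α := ℝ)).2 this
      push_cast at this
      linarith
    have h2 : (m n : ℝ) < x n + 1 := Nat.ceil_lt_add_one (by linarith)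
    linarith
  have hid : x n * LL n / L n = a := by
    rw [hxdef]
    field_simp
  show (H n ω : ℝ) * LL n / L n ≤ a
  rw [← hid]
  gcongr

lemma step_lower {Ω : Type*} [MeasureSpace Ω] [IsProbabilityMeasure (ℙ : Measure Ω)]
    (γ : ℝ) (hγ : 0 < γ) (H : ℕ → Ω → ℕ) (hmeas : ∀ n, Measurable (H n))
    (hdist : ∀ n, 1 ≤ n → ∀ m ≤ n,
      ℙ {ω | m ≤ H n ω}
        = ENNReal.ofReal ((∏ k ∈ Finset.Icc 1 (m - 1), (1 + (k : ℝ) * γ))⁻¹))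
    (hindep : ∀ r : ℝ, 0 < r → r < 1 → ∀ s : ℝ, 1 < s → s < 1 / r →
      ∃ N : ℕ, iIndepSet
        (fun n : {k : ℕ // N ≤ k} =>
          {ω | ⌈r * Real.log (⌊((n : ℕ) : ℝ) ^ s⌋₊ : ℝ)
                 / Real.log (Real.log (⌊((n : ℕ) : ℝ) ^ s⌋₊ : ℝ))⌉₊
               ≤ H ⌊((n : ℕ) : ℝ) ^ s⌋₊ ω}) ℙ)
    (r : ℝ) (hr0 : 0 < r) (hr1 : r < 1) :
    ∀ᵐ ω ∂ℙ, ∃ᶠ n in atTop,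
      r ≤ (H n ω : ℝ) * Real.log (Real.log n) / Real.log n := by
  have hrinv : 1 < 1 / r := one_lt_one_div hr0 hr1
  set s : ℝ := (1 + 1 / r) / 2 with hsdef
  have hs1 : 1 < s := by rw [hsdef]; linarith
  have hs2 : s < 1 / r := by rw [hsdef]; linarith
  obtain ⟨N, hind⟩ := hindep r hr0 hr1 s hs1 hs2
  set L : ℕ → ℝ := fun n => Real.log n with hLdef
  set LL : ℕ → ℝ := fun n => Real.log (L n) with hLLdef
  set x : ℕ → ℝ := fun n => r * L n / LL n with hxdef
  set m : ℕ → ℕ := fun n => ⌈x n⌉₊ with hmdef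
  set nn : ℕ → ℕ := fun k => ⌊(k : ℝ) ^ s⌋₊ with hnndef
  set S : ℕ → Set Ω := fun k => {ω | m (nn k) ≤ H (nn k) ω} with hSdef
  -- basic parameters
  set r' : ℝ := (r + 1 / s) / 2 with hr'def
  have hs0 : 0 < s := by linarith
  have hrs : r < 1 / s := by
    have h := mul_lt_mul_of_pos_left hs2 hr0
    rw [mul_one_div, div_self hr0.ne'] at h
    rw [lt_div_iff₀ hs0]; linarith
  have hr'1 : r < r' := by rw [hr'def]; linarith
  have hr'0 : 0 < r' := by linarith
  have hr's : r' * s < 1 := by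
    have h' : r' < 1 / s := by rw [hr'def]; linarith
    have h := mul_lt_mul_of_pos_right h' hs0
    rw [one_div, inv_mul_cancel₀ hs0.ne'] at h
    linarith
  set q : ℝ := s * r' with hqdef
  have hq0 : 0 < q := by positivity
  have hq1 : q < 1 := by rw [hqdef]; linarith [hr's]
  -- measurability
  have hSm : ∀ k, MeasurableSet (S k) := fun k => (hmeas (nn k)) measurableSet_Ici
  -- transfer independence to an ℕ-indexed family
  set s' : ℕ → Set Ω := fun j => S (N + j) with hs'def
  have hind2 : iIndepSet (fun n : {k : ℕ // N ≤ k} => S (n : ℕ)) ℙ := hind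
  have hind' := (iIndepSet_iff_meas_biInter (fun i : {k : ℕ // N ≤ k} => hSm (i : ℕ))).1 hind2
  have hindN : iIndepSet s' ℙ := by
    apply (iIndepSet_iff_meas_biInter (fun j => hSm (N + j))).2
    intro t
    set e : ℕ → {k : ℕ // N ≤ k} := fun j => ⟨N + j, Nat.le_add_right N j⟩ with hedef
    have he : Function.Injective e := by
      intro a b hab
      have : N + a = N + b := congrArg Subtype.val hab
      omega
    have h1 := hind' (t.image e)
    have h2 : (⋂ i ∈ t.image e, S (i : ℕ)) = ⋂ j ∈ t, s' j := by
      ext ω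
      simp only [Set.mem_iInter, Finset.mem_image]
      constructor
      · intro h j hj
        exact h (e j) ⟨j, hj, rfl⟩
      · rintro h i ⟨j, hj, rfl⟩
        exact h j hj
    have h3 : (∏ i ∈ t.image e, ℙ (S (i : ℕ))) = ∏ j ∈ t, ℙ (s' j) :=
      Finset.prod_image (fun a _ b _ hab => he hab)
    rw [← h2, ← h3]
    exact h1
  -- asymptotics
  have hL : Tendsto L atTop atTop := Real.tendsto_log_atTop.comp tendsto_natCast_atTop_atTop
  have hLL : Tendsto LL atTop atTop := Real.tendsto_log_atTop.comp hL
  have hx : Tendsto x atTop atTop := by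
    have h1 : Tendsto (fun n => L n / LL n) atTop atTop := self_div_log_tendsto.comp hL
    have := h1.const_mul_atTop hr0
    simpa [hxdef, mul_div_assoc] using this
  have e1 : ∀ᶠ n : ℕ in atTop, 1 < L n := hL.eventually_gt_atTop 1
  have e2 : ∀ᶠ n : ℕ in atTop, 2 ≤ x n := hx.eventually_ge_atTop 2
  have e3 : ∀ᶠ n : ℕ in atTop,
      ((m n : ℝ) - 1) * (Real.log ((m n : ℝ) - 1) + Real.log (1 + γ)) / L n ≤ r' :=
    (key_tendsto r (Real.log (1 + γ)) hr0).eventually_le_const hr'1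
  have e4 : ∀ᶠ n : ℕ in atTop, 1 ≤ LL n := hLL.eventually_ge_atTop 1
  have e5 : ∀ᶠ n : ℕ in atTop, 1 ≤ n := eventually_ge_atTop 1
  have evn : ∀ᶠ n : ℕ in atTop, (1 < L n ∧ 2 ≤ x n) ∧
      (((m n : ℝ) - 1) * (Real.log ((m n : ℝ) - 1) + Real.log (1 + γ)) / L n ≤ r' ∧ 1 ≤ LL n)
      ∧ 1 ≤ n := (e1.and e2).and ((e3.and e4).and e5)
  have hnn : Tendsto nn atTop atTop := by
    apply tendsto_atTop_mono' atTop ?_ tendsto_id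
    filter_upwards [eventually_ge_atTop 1] with k hk1
    have hk1' : (1:ℝ) ≤ (k:ℝ) := by exact_mod_cast hk1
    have hle : ((k:ℝ)) ≤ (k:ℝ) ^ s := by
      calc (k:ℝ) = (k:ℝ) ^ (1:ℝ) := (Real.rpow_one _).symm
        _ ≤ (k:ℝ) ^ s := Real.rpow_le_rpow_of_exponent_le hk1' hs1.le
    exact Nat.le_floor hle
  -- pointwise lower bound for the probabilities
  have lowbd : ∀ᶠ k : ℕ in atTop, ENNReal.ofReal ((k:ℝ) ^ (-q)) ≤ ℙ (S k) := by
    filter_upwards [hnn.eventually evn, eventually_ge_atTop 1] with k hk hk1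
    obtain ⟨⟨hL1, hx2⟩, ⟨hkey, hLL1⟩, hn1⟩ := hk
    have hL0 : (0:ℝ) < L (nn k) := by linarith
    have hLL0 : (0:ℝ) < LL (nn k) := by linarith
    have hn0 : (0:ℝ) < ((nn k : ℕ) : ℝ) := by exact_mod_cast hn1
    have hk0 : (0:ℝ) < (k:ℝ) := by exact_mod_cast hk1
    have hxm : x (nn k) ≤ (m (nn k) : ℝ) := Nat.le_ceil _
    have hm2 : 2 ≤ m (nn k) := by exact_mod_cast le_trans hx2 hxm
    have hmn : m (nn k) ≤ nn k := by
      have hxL : x (nn k) ≤ L (nn k) := by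
        rw [hxdef, div_le_iff₀ hLL0]
        nlinarith
      have h5 : (m (nn k) : ℝ) < x (nn k) + 1 := Nat.ceil_lt_add_one (by linarith)
      have h6 : L (nn k) ≤ ((nn k : ℕ):ℝ) - 1 := by
        have := Real.log_le_sub_one_of_pos hn0
        simpa [hLdef] using this
      have : (m (nn k) : ℝ) ≤ ((nn k : ℕ) : ℝ) := by linarith
      exact_mod_cast this
    have hPeq := hdist (nn k) hn1 (m (nn k)) hmn
    have hMcast : ((m (nn k) - 1 : ℕ) : ℝ) = (m (nn k) : ℝ) - 1 := by
      have h7 : 1 ≤ m (nn k) := by omega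
      push_cast [h7]; ring
    set M : ℕ := m (nn k) - 1 with hMdef
    have hPpos := Pi_pos hγ M
    have hupp := log_Pi_upper hγ M
    rw [hMcast] at hupp
    have hkey2 : ((m (nn k):ℝ)-1) * (Real.log ((m (nn k):ℝ)-1) + Real.log (1+γ))
        ≤ r' * L (nn k) := by
      rw [div_le_iff₀ hL0] at hkey
      linarith
    have hlogP : Real.log (∏ kk ∈ Finset.Icc 1 M, (1 + (kk:ℝ)*γ)) ≤ q * Real.log (k:ℝ) := by
      have hfl : ((nn k : ℕ):ℝ) ≤ (k:ℝ) ^ s := Nat.floor_le (by positivity)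
      have h8 : L (nn k) ≤ s * Real.log (k:ℝ) := by
        have h9 : L (nn k) ≤ Real.log ((k:ℝ)^s) := Real.log_le_log hn0 hfl
        rwa [Real.log_rpow hk0] at h9
      have h10 : r' * L (nn k) ≤ r' * (s * Real.log (k:ℝ)) :=
        mul_le_mul_of_nonneg_left h8 hr'0.le
      have h11 : r' * (s * Real.log (k:ℝ)) = q * Real.log (k:ℝ) := by rw [hqdef]; ring
      linarith
    have hPle : (∏ kk ∈ Finset.Icc 1 M, (1 + (kk:ℝ)*γ)) ≤ (k:ℝ) ^ q := by
      have h9 := Real.exp_le_exp.2 hlogP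
      rw [Real.exp_log hPpos] at h9
      rw [Real.rpow_def_of_pos hk0, mul_comm]
      exact h9
    have hinv : (k:ℝ) ^ (-q) ≤ (∏ kk ∈ Finset.Icc 1 M, (1 + (kk:ℝ)*γ))⁻¹ := by
      rw [Real.rpow_neg hk0.le]
      exact inv_anti₀ hPpos hPle
    calc ENNReal.ofReal ((k:ℝ)^(-q))
        ≤ ENNReal.ofReal ((∏ kk ∈ Finset.Icc 1 M, (1 + (kk:ℝ)*γ))⁻¹) :=
          ENNReal.ofReal_le_ofReal hinv
      _ = ℙ (S k) := hPeq.symm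
  -- divergence of the series
  have hdiv : (∑' j : ℕ, ℙ (s' j)) = ⊤ := by
    by_contra hfin
    obtain ⟨K, hK⟩ := eventually_atTop.1 lowbd
    set g : ℕ → ℝ := fun j => if j < K then 0 else ((N + j : ℕ) : ℝ) ^ (-q) with hgdef
    have hgnn : ∀ j, 0 ≤ g j := by
      intro j
      rw [hgdef]
      dsimp only
      split
      · exact le_refl 0
      · positivity
    have hle : ∀ j : ℕ, ENNReal.ofReal (g j) ≤ ℙ (s' j) := by
      intro j
      rw [hgdef]
      dsimp only
      split
      · simp
      · next h => exact hK (N + j) (by omega)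
    have hne : (∑' j : ℕ, ENNReal.ofReal (g j)) ≠ ⊤ :=
      ne_top_of_le_ne_top hfin (ENNReal.tsum_le_tsum hle)
    have hgsum : Summable g := by
      have h1 : (∑' j : ℕ, (((g j).toNNReal : ℝ≥0) : ℝ≥0∞)) ≠ ⊤ := by
        simpa [ENNReal.ofReal] using hne
      have h2 := ENNReal.tsum_coe_ne_top_iff_summable.1 h1
      have h3 := NNReal.summable_coe.2 h2
      refine h3.congr fun j => ?_
      exact Real.coe_toNNReal _ (hgnn j)
    have hshift : Summable (fun j : ℕ => ((j + (N + K) : ℕ) : ℝ) ^ (-q)) := by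
      have h4 := (summable_nat_add_iff K).2 hgsum
      refine h4.congr fun j => ?_
      rw [hgdef]
      dsimp only
      rw [if_neg (by omega)]
      have : N + (j + K) = j + (N + K) := by omega
      rw [this]
    have hf : Summable (fun n : ℕ => (n:ℝ) ^ (-q)) := (summable_nat_add_iff (N + K)).1 hshift
    have := Real.summable_nat_rpow.1 hf
    linarith
  -- second Borel–Cantelli
  have hone : ℙ (limsup s' atTop) = 1 :=
    ProbabilityTheory.measure_limsup_eq_one (fun j => hSm (N + j)) hindN hdiv
  have hlimsm : MeasurableSet (limsup s' atTop) :=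
    MeasurableSet.measurableSet_limsup (fun j => hSm (N + j))
  have hae : ∀ᵐ ω ∂ℙ, ω ∈ limsup s' atTop := by
    rw [ae_iff]
    have h5 : ℙ (limsup s' atTop)ᶜ = 0 := (prob_compl_eq_zero_iff hlimsm).2 hone
    exact h5
  filter_upwards [hae] with ω hω
  have hfreqj : ∃ᶠ j in atTop, ω ∈ S (N + j) := mem_limsup_iff_frequently_mem.1 hω
  have hshiftT : Tendsto (fun j : ℕ => N + j) atTop atTop := by
    simpa [add_comm] using tendsto_add_atTop_nat N
  have hfreqk : ∃ᶠ k in atTop, ω ∈ S k := hshiftT.frequently hfreqj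
  have hgood : ∃ᶠ k in atTop, (ω ∈ S k ∧ (1 < L (nn k) ∧ 2 ≤ x (nn k))) :=
    hfreqk.and_eventually (hnn.eventually (e1.and e2))
  refine Tendsto.frequently hnn (hgood.mono ?_)
  rintro k ⟨hSk, hL1, hx2⟩
  have hL0 : (0:ℝ) < L (nn k) := by linarith
  have hLL0 : (0:ℝ) < LL (nn k) := Real.log_pos hL1
  have hH : x (nn k) ≤ (H (nn k) ω : ℝ) := by
    have h1 : m (nn k) ≤ H (nn k) ω := hSk
    have h2 := Nat.le_ceil (x (nn k))
    have h3 : (m (nn k) : ℝ) ≤ (H (nn k) ω : ℝ) := by exact_mod_cast h1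
    exact le_trans h2 h3
  have hid : x (nn k) * LL (nn k) / L (nn k) = r := by
    rw [hxdef]
    field_simp
  show r ≤ (H (nn k) ω : ℝ) * LL (nn k) / L (nn k)
  rw [← hid]
  gcongr


/-- Limsup behaviour of the tail red cluster sizes on the semi-line:
if `ℙ(Ĥ_n ≥ m) = ∏_{k=1}^{m-1}(1+kγ)⁻¹` for `m ≤ n`, `Ĥ_n ≤ n`, and the
events `{Ĥ_{⌊n^s⌋} ≥ ⌈r log⌊n^s⌋ / log log⌊n^s⌋⌉}` are eventually independent
across `n`, then almost surely `limsup Ĥ_n log log n / log n = 1`. -/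
theorem tail_red_cluster_limsup
    {Ω : Type*} [MeasureSpace Ω] [IsProbabilityMeasure (ℙ : Measure Ω)]
    (γ : ℝ) (hγ : 0 < γ)
    (H : ℕ → Ω → ℕ) (hmeas : ∀ n, Measurable (H n))
    (hbound : ∀ n ω, H n ω ≤ n)
    (hdist : ∀ n, 1 ≤ n → ∀ m ≤ n,
      ℙ {ω | m ≤ H n ω}
        = ENNReal.ofReal ((∏ k ∈ Finset.Icc 1 (m - 1), (1 + (k : ℝ) * γ))⁻¹))
    (hindep : ∀ r : ℝ, 0 < r → r < 1 → ∀ s : ℝ, 1 < s → s < 1 / r →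
      ∃ N : ℕ, iIndepSet
        (fun n : {k : ℕ // N ≤ k} =>
          {ω | ⌈r * Real.log (⌊((n : ℕ) : ℝ) ^ s⌋₊ : ℝ)
                 / Real.log (Real.log (⌊((n : ℕ) : ℝ) ^ s⌋₊ : ℝ))⌉₊
               ≤ H ⌊((n : ℕ) : ℝ) ^ s⌋₊ ω}) ℙ) :
    ∀ᵐ ω ∂ℙ, Filter.limsup
        (fun n : ℕ => (H n ω : ℝ) * Real.log (Real.log n) / Real.log n)
        atTop = 1 := by
  have hup : ∀ j : ℕ, ∀ᵐ ω ∂ℙ, ∀ᶠ n in atTop,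
      (H n ω : ℝ) * Real.log (Real.log n) / Real.log n ≤ 1 + 1/((j:ℝ)+1) := by
    intro j
    apply step_upper γ hγ H hdist
    have : (0:ℝ) < 1/((j:ℝ)+1) := by positivity
    linarith
  have hlow : ∀ j : ℕ, ∀ᵐ ω ∂ℙ, ∃ᶠ n in atTop,
      1 - 1/((j:ℝ)+2) ≤ (H n ω : ℝ) * Real.log (Real.log n) / Real.log n := by
    intro j
    apply step_lower γ hγ H hmeas hdist hindep
    · have h1 : 1/((j:ℝ)+2) ≤ 1/(2:ℝ) := by
        apply one_div_le_one_div_of_le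
        · norm_num
        · have : (0:ℝ) ≤ (j:ℝ) := Nat.cast_nonneg j
          linarith
      linarith
    · have : (0:ℝ) < 1/((j:ℝ)+2) := by positivity
      linarith
  filter_upwards [ae_all_iff.2 hup, ae_all_iff.2 hlow] with ω hu hl
  set f : ℕ → ℝ := fun n => (H n ω : ℝ) * Real.log (Real.log n) / Real.log n with hfdef
  have hbdd : IsBoundedUnder (· ≤ ·) atTop f :=
    isBoundedUnder_of_eventually_le (hu 0)
  have hnonneg : ∀ᶠ n : ℕ in atTop, (0:ℝ) ≤ f n := by
    have hL : Tendsto (fun n : ℕ => Real.log n) atTop atTop :=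
      Real.tendsto_log_atTop.comp tendsto_natCast_atTop_atTop
    filter_upwards [hL.eventually_gt_atTop 1] with n h1
    have h2 : (0:ℝ) ≤ Real.log (Real.log n) := Real.log_nonneg h1.le
    have h3 : (0:ℝ) < Real.log n := by linarith
    exact div_nonneg (mul_nonneg (Nat.cast_nonneg _) h2) h3.le
  have hcob : IsCoboundedUnder (· ≤ ·) atTop f :=
    isCoboundedUnder_le_of_eventually_le atTop hnonneg
  have hle1 : limsup f atTop ≤ 1 := by
    by_contra hgt
    rw [not_le] at hgt
    obtain ⟨j, hj⟩ := exists_nat_one_div_lt (show (0:ℝ) < limsup f atTop - 1 by linarith)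
    have h4 : limsup f atTop ≤ 1 + 1/((j:ℝ)+1) := limsup_le_of_le hcob (hu j)
    linarith
  have hge1 : (1:ℝ) ≤ limsup f atTop := by
    by_contra hlt
    rw [not_le] at hlt
    obtain ⟨j, hj⟩ := exists_nat_one_div_lt (show (0:ℝ) < 1 - limsup f atTop by linarith)
    have h2 : 1 - 1/((j:ℝ)+2) ≤ limsup f atTop := le_limsup_of_frequently_le (hl j) hbdd
    have h3 : 1/((j:ℝ)+2) ≤ 1/((j:ℝ)+1) := by
      apply one_div_le_one_div_of_le
      · positivity
      · linarith
    linarith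
  exact le_antisymm hle1 hge1
end

section
/- Fix $\gamma > 0$, let $(T_k)_{k\geq 2}$ be i.i.d. Exp(1) and $(\mathbf{C}_j)_{j\geq 1}$ i.i.d. Exp($\gamma$), all independent. For a nonempty subset $A = \{a_1 < a_2 < \cdots < a_\ell\} \subset \{1,\ldots,n\}$ with the convention $a_{\ell+1} = n+1$, the probability that $\mathbf{C}_{a_j} > \sum_{k=a_j+1}^{n+1} T_k$ for all $j = 1,\ldots,\ell$ equals $\prod_{j=1}^\ell (1 + j\gamma)^{-(a_{j+1} - a_j)}$. -/
open MeasureTheory ProbabilityTheory Filter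

section RecoveryHelpers

open Real Set
open scoped ENNReal NNReal

lemma recovery_expMeasure_eq_withDensity (r : ℝ) :
    expMeasure r = MeasureTheory.volume.withDensity (exponentialPDF r) := by
  rw [expMeasure, gammaMeasure]
  congr 1

lemma recovery_measurable_exponentialPDF (r : ℝ) : Measurable (exponentialPDF r) := by
  exact (measurable_exponentialPDFReal r).ennreal_ofReal

lemma recovery_expMeasure_Iio_zero (r : ℝ) : expMeasure r (Set.Iio 0) = 0 := by
  rw [recovery_expMeasure_eq_withDensity, withDensity_apply _ measurableSet_Iio]
  exact lintegral_exponentialPDF_of_nonpos le_rfl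

lemma recovery_expMeasure_Ioi {r : ℝ} (hr : 0 < r) (s : ℝ) :
    expMeasure r (Set.Ioi s) = ENNReal.ofReal (Real.exp (-(r * max s 0))) := by
  haveI := isProbabilityMeasure_expMeasure hr
  have hIic : expMeasure r (Set.Iic s)
      = ENNReal.ofReal (if 0 ≤ s then 1 - Real.exp (-(r * s)) else 0) := by
    rw [recovery_expMeasure_eq_withDensity, withDensity_apply _ measurableSet_Iic]
    exact lintegral_exponentialPDF_eq_antiDeriv hr s
  have h := measure_compl (μ := expMeasure r) (s := Set.Iic s) measurableSet_Iic
    (measure_ne_top _ _)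
  rw [compl_Iic] at h
  rw [h, measure_univ, hIic]
  by_cases hs : 0 ≤ s
  · rw [if_pos hs, max_eq_left hs]
    have he1 : Real.exp (-(r * s)) ≤ 1 := by
      rw [Real.exp_le_one_iff]
      nlinarith
    rw [show (1 : ℝ≥0∞) = ENNReal.ofReal 1 by simp,
      ← ENNReal.ofReal_sub _ (by linarith [Real.exp_pos (-(r * s))])]
    norm_num
  · rw [if_neg hs, max_eq_right (le_of_not_ge hs)]
    simp

lemma recovery_expInt {c : ℝ} (hc : 0 ≤ c) :
    ∫⁻ x, ENNReal.ofReal (Real.exp (-(c * max x 0))) ∂(expMeasure 1)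
      = ENNReal.ofReal ((1 + c)⁻¹) := by
  have h1c : (0:ℝ) < 1 + c := by linarith
  rw [recovery_expMeasure_eq_withDensity,
    lintegral_withDensity_eq_lintegral_mul _ (recovery_measurable_exponentialPDF 1)
      (by fun_prop)]
  have hpt : ∀ x, (exponentialPDF 1 * fun x => ENNReal.ofReal (Real.exp (-(c * max x 0)))) x
      = ENNReal.ofReal ((1 + c)⁻¹) * exponentialPDF (1 + c) x := by
    intro x
    simp only [Pi.mul_apply]
    rcases le_or_gt 0 x with hx | hx
    · rw [exponentialPDF_of_nonneg hx, exponentialPDF_of_nonneg hx, max_eq_left hx,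
        ← ENNReal.ofReal_mul (by positivity), ← ENNReal.ofReal_mul (by positivity)]
      congr 1
      rw [one_mul, inv_mul_cancel_left₀ h1c.ne', ← Real.exp_add]
      ring_nf
    · rw [exponentialPDF_of_neg hx, exponentialPDF_of_neg hx]
      simp
  rw [lintegral_congr hpt, lintegral_const_mul _ (recovery_measurable_exponentialPDF _),
    lintegral_exponentialPDF_eq_one h1c, mul_one]

/-- extend a family restricted to a finset by 0 -/
noncomputable def recoveryExt {ι : Type*} [DecidableEq ι] (S : Finset ι)
    (v : {x // x ∈ S} → ℝ) : ι → ℝ := fun x => if h : x ∈ S then v ⟨x, h⟩ else 0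

lemma recovery_measurable_ext {ι : Type*} [DecidableEq ι] (S : Finset ι) :
    Measurable (recoveryExt (ι := ι) S) := by
  apply measurable_pi_lambda
  intro x
  by_cases h : x ∈ S
  · simp only [recoveryExt, dif_pos h]
    exact measurable_pi_apply _
  · simp only [recoveryExt, dif_neg h]
    exact measurable_const

lemma recovery_indep_extend {Ω : Type*} [MeasurableSpace Ω] {μ : Measure Ω}
    {ι : Type*} [DecidableEq ι] {Z : ι → Ω → ℝ}
    (hZ : ∀ i, Measurable (Z i))
    (hindep : iIndepFun Z μ)
    (S1 S2 : Finset ι) (h : Disjoint S1 S2) :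
    IndepFun (fun ω x => if x ∈ S1 then Z x ω else 0)
      (fun ω x => if x ∈ S2 then Z x ω else 0) μ := by
  have base := hindep.indepFun_finset S1 S2 h hZ
  have h2 := base.comp (recovery_measurable_ext S1) (recovery_measurable_ext S2)
  convert h2 using 2
  all_goals (funext x; simp [recoveryExt])

lemma recovery_peelC {Ω : Type*} [MeasurableSpace Ω] {μ : Measure Ω}
    {β : Type*} [MeasurableSpace β] [IsProbabilityMeasure μ] {r : ℝ} (hr : 0 < r)
    {X : Ω → ℝ} {W : Ω → β} (hX : Measurable X) (hW : Measurable W)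
    (hXd : μ.map X = expMeasure r) (hind : IndepFun W X μ)
    {F : β → ℝ≥0∞} (hF : Measurable F) {g : β → ℝ} (hg : Measurable g) :
    ∫⁻ ω, F (W ω) * (if g (W ω) < X ω then 1 else 0) ∂μ
      = ∫⁻ ω, F (W ω) * ENNReal.ofReal (Real.exp (-(r * max (g (W ω)) 0))) ∂μ := by
  haveI : IsProbabilityMeasure (μ.map W) := Measure.isProbabilityMeasure_map hW.aemeasurable
  haveI : IsProbabilityMeasure (expMeasure r) := isProbabilityMeasure_expMeasure hr
  have hprod : μ.map (fun ω => (W ω, X ω)) = (μ.map W).prod (μ.map X) :=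
    (indepFun_iff_map_prod_eq_prod_map_map hW.aemeasurable hX.aemeasurable).mp hind
  have hm1 : Measurable (fun p : β × ℝ => F p.1 * (if g p.1 < p.2 then 1 else 0)) :=
    (hF.comp measurable_fst).mul
      (Measurable.ite (measurableSet_lt (hg.comp measurable_fst) measurable_snd)
        measurable_const measurable_const)
  have hm2 : Measurable (fun w : β => F w * ENNReal.ofReal (Real.exp (-(r * max (g w) 0)))) := by
    fun_prop
  calc ∫⁻ ω, F (W ω) * (if g (W ω) < X ω then 1 else 0) ∂μ
      = ∫⁻ p : β × ℝ, F p.1 * (if g p.1 < p.2 then 1 else 0)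
          ∂((μ.map W).prod (expMeasure r)) := by
        rw [← hXd, ← hprod, lintegral_map hm1 (hW.prodMk hX)]
    _ = ∫⁻ w, ∫⁻ x, F w * (if g w < x then 1 else 0) ∂(expMeasure r) ∂(μ.map W) := by
        rw [lintegral_prod _ hm1.aemeasurable]
    _ = ∫⁻ w, F w * ENNReal.ofReal (Real.exp (-(r * max (g w) 0))) ∂(μ.map W) := by
        apply lintegral_congr
        intro w
        have hmf : Measurable (fun x : ℝ => if g w < x then (1:ℝ≥0∞) else 0) := by
          refine Measurable.ite ?_ measurable_const measurable_const
          exact measurableSet_lt measurable_const measurable_id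
        rw [lintegral_const_mul _ hmf]
        congr 1
        have : ∀ x : ℝ, (if g w < x then (1:ℝ≥0∞) else 0)
            = Set.indicator (Set.Ioi (g w)) 1 x := by
          intro x
          simp [Set.indicator_apply, Set.mem_Ioi]
        rw [lintegral_congr this, lintegral_indicator_one measurableSet_Ioi,
          recovery_expMeasure_Ioi hr]
    _ = ∫⁻ ω, F (W ω) * ENNReal.ofReal (Real.exp (-(r * max (g (W ω)) 0))) ∂μ := by
        rw [lintegral_map hm2 hW]

end RecoveryHelpers

section RecoveryCombinatorics

variable {a : ℕ → ℕ} {n ℓ : ℕ}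

lemma recovery_Icc_filter_eq (hmono : StrictMonoOn a (Set.Icc 1 ℓ)) (hℓ : 1 ≤ ℓ)
    {j : ℕ} (hj : j ∈ Finset.Icc 1 ℓ) :
    Finset.Icc (a j + 1) (n + 1)
      = (Finset.Icc (a 1 + 1) (n + 1)).filter (fun k => a j < k) := by
  have hj' := Finset.mem_Icc.mp hj
  have ha1j : a 1 ≤ a j := hmono.monotoneOn (Set.mem_Icc.mpr ⟨le_refl 1, hℓ⟩)
    (Set.mem_Icc.mpr hj') hj'.1
  ext k
  simp only [Finset.mem_Icc, Finset.mem_filter]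
  omega

lemma recovery_sum_S_eq (hmono : StrictMonoOn a (Set.Icc 1 ℓ)) (hℓ : 1 ≤ ℓ) (f : ℕ → ℝ) :
    ∑ j ∈ Finset.Icc 1 ℓ, ∑ k ∈ Finset.Icc (a j + 1) (n + 1), f k
      = ∑ k ∈ Finset.Icc (a 1 + 1) (n + 1),
          (((Finset.Icc 1 ℓ).filter (fun j => a j < k)).card : ℝ) * f k := by
  classical
  have h1 : ∀ j ∈ Finset.Icc 1 ℓ, ∑ k ∈ Finset.Icc (a j + 1) (n + 1), f k
      = ∑ k ∈ Finset.Icc (a 1 + 1) (n + 1), if a j < k then f k else 0 := by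
    intro j hj
    rw [recovery_Icc_filter_eq hmono hℓ hj, Finset.sum_filter]
  rw [Finset.sum_congr rfl h1, Finset.sum_comm]
  refine Finset.sum_congr rfl fun k _ => ?_
  rw [← Finset.sum_filter, Finset.sum_const, nsmul_eq_mul]

lemma recovery_K_eq_biUnion (hmono : StrictMonoOn a (Set.Icc 1 ℓ)) (hℓ : 1 ≤ ℓ)
    (han : a ℓ ≤ n) (hatop : a (ℓ + 1) = n + 1) :
    Finset.Icc (a 1 + 1) (n + 1)
      = (Finset.Icc 1 ℓ).biUnion (fun j => Finset.Icc (a j + 1) (a (j + 1))) := by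
  classical
  ext k
  simp only [Finset.mem_Icc, Finset.mem_biUnion]
  constructor
  · rintro ⟨hk1, hk2⟩
    set Fs := (Finset.Icc 1 ℓ).filter (fun j => a j < k) with hFs
    have h1F : (1 : ℕ) ∈ Fs := by
      simp only [hFs, Finset.mem_filter, Finset.mem_Icc]
      omega
    have hne : Fs.Nonempty := ⟨1, h1F⟩
    set j := Fs.max' hne with hjdef
    have hjF : j ∈ Fs := Fs.max'_mem hne
    have hjIcc : j ∈ Finset.Icc 1 ℓ := (Finset.mem_filter.mp hjF).1
    have hajk : a j < k := (Finset.mem_filter.mp hjF).2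
    have hj' := Finset.mem_Icc.mp hjIcc
    refine ⟨j, hj', hajk, ?_⟩
    by_cases hje : j = ℓ
    · rw [hje, hatop]; exact hk2
    · have hjlt : j < ℓ := lt_of_le_of_ne hj'.2 hje
      by_contra hlt
      push_neg at hlt
      have : j + 1 ∈ Fs := by
        simp only [hFs, Finset.mem_filter, Finset.mem_Icc]
        omega
      have := Fs.le_max' _ this
      omega
  · rintro ⟨j, hj, hk1, hk2⟩
    have ha1j : a 1 ≤ a j := hmono.monotoneOn (Set.mem_Icc.mpr ⟨le_refl 1, hℓ⟩)
      (Set.mem_Icc.mpr hj) hj.1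
    refine ⟨by omega, ?_⟩
    by_cases hje : j = ℓ
    · rw [hje, hatop] at hk2; omega
    · have hjlt : j + 1 ≤ ℓ := by omega
      have : a (j + 1) ≤ a ℓ := hmono.monotoneOn (Set.mem_Icc.mpr ⟨by omega, hjlt⟩)
        (Set.mem_Icc.mpr ⟨hℓ, le_refl ℓ⟩) hjlt
      omega

lemma recovery_pdisj (hmono : StrictMonoOn a (Set.Icc 1 ℓ)) :
    (↑(Finset.Icc 1 ℓ) : Set ℕ).PairwiseDisjoint
      (fun j => Finset.Icc (a j + 1) (a (j + 1))) := by
  have key : ∀ i j : ℕ, 1 ≤ i → i ≤ ℓ → 1 ≤ j → j ≤ ℓ → i < j →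
      Disjoint (Finset.Icc (a i + 1) (a (i + 1))) (Finset.Icc (a j + 1) (a (j + 1))) := by
    intro i j hi1 hi2 hj1 hj2 h
    have hii : a (i + 1) ≤ a j := by
      rcases eq_or_lt_of_le (Nat.succ_le_of_lt h) with he | hl
      · simp only [Nat.succ_eq_add_one] at he
        rw [he]
      · exact le_of_lt (hmono (Set.mem_Icc.mpr ⟨by omega, by omega⟩)
          (Set.mem_Icc.mpr ⟨by omega, hj2⟩) (by omega))
    rw [Finset.disjoint_left]
    intro k hk1 hk2
    have h1 := Finset.mem_Icc.mp hk1
    have h2 := Finset.mem_Icc.mp hk2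
    omega
  intro i hi j hj hij
  simp only [Finset.coe_Icc, Set.mem_Icc] at hi hj
  rcases lt_or_gt_of_ne hij with h | h
  · exact key i j hi.1 hi.2 hj.1 hj.2 h
  · exact (key j i hj.1 hj.2 hi.1 hi.2 h).symm

lemma recovery_filter_eq_Icc (hmono : StrictMonoOn a (Set.Icc 1 ℓ))
    {j k : ℕ} (hj : j ∈ Finset.Icc 1 ℓ) (hk1 : a j < k) (hk2 : k ≤ a (j + 1)) :
    (Finset.Icc 1 ℓ).filter (fun j' => a j' < k) = Finset.Icc 1 j := by
  have hj' := Finset.mem_Icc.mp hj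
  ext j'
  simp only [Finset.mem_filter, Finset.mem_Icc]
  constructor
  · rintro ⟨⟨h1, h2⟩, h3⟩
    refine ⟨h1, ?_⟩
    by_contra hgt
    push_neg at hgt
    have hle : a (j + 1) ≤ a j' := by
      rcases eq_or_lt_of_le (Nat.succ_le_of_lt hgt) with he | hl
      · simp only [Nat.succ_eq_add_one] at he
        rw [he]
      · exact le_of_lt (hmono (Set.mem_Icc.mpr ⟨by omega, by omega⟩)
          (Set.mem_Icc.mpr ⟨h1, h2⟩) hl)
    omega
  · rintro ⟨h1, h2⟩
    have : a j' ≤ a j := hmono.monotoneOn (Set.mem_Icc.mpr ⟨h1, by omega⟩)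
      (Set.mem_Icc.mpr hj') h2
    exact ⟨⟨h1, by omega⟩, by omega⟩

lemma recovery_prod_regroup {M : Type*} [CommMonoid M]
    (hmono : StrictMonoOn a (Set.Icc 1 ℓ)) (hℓ : 1 ≤ ℓ)
    (han : a ℓ ≤ n) (hatop : a (ℓ + 1) = n + 1) (g : ℕ → M) :
    ∏ k ∈ Finset.Icc (a 1 + 1) (n + 1),
        g ((Finset.Icc 1 ℓ).filter (fun j => a j < k)).card
      = ∏ j ∈ Finset.Icc 1 ℓ, g j ^ (a (j + 1) - a j) := by
  classical
  rw [recovery_K_eq_biUnion hmono hℓ han hatop, Finset.prod_biUnion (recovery_pdisj hmono)]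
  refine Finset.prod_congr rfl fun j hj => ?_
  have : ∀ k ∈ Finset.Icc (a j + 1) (a (j + 1)),
      g ((Finset.Icc 1 ℓ).filter (fun j' => a j' < k)).card = g j := by
    intro k hk
    have hk' := Finset.mem_Icc.mp hk
    rw [recovery_filter_eq_Icc hmono hj (by omega) hk'.2, Nat.card_Icc]
    have h2 : j + 1 - 1 = j := by omega
    rw [h2]
  rw [Finset.prod_congr rfl this, Finset.prod_const, Nat.card_Icc]
  have h3 : a (j + 1) + 1 - (a j + 1) = a (j + 1) - a j := by omega
  rw [h3]

end RecoveryCombinatorics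

section RecoveryClaims

open scoped ENNReal

lemma recovery_claim1
    {Ω : Type*} [MeasureSpace Ω] [IsProbabilityMeasure (ℙ : Measure Ω)]
    (γ : ℝ) (hγ : 0 < γ)
    (T : ℕ → Ω → ℝ) (C : ℕ → Ω → ℝ)
    (hTmeas : ∀ k, Measurable (T k)) (hCmeas : ∀ j, Measurable (C j))
    (hindep : iIndepFun
      (Sum.elim T C : ℕ ⊕ ℕ → Ω → ℝ) ℙ)
    (hCdist : ∀ j, Measure.map (C j) ℙ = expMeasure γ)
    (n ℓ : ℕ) (hℓ : 1 ≤ ℓ) (a : ℕ → ℕ)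
    (hmono : StrictMonoOn a (Set.Icc 1 ℓ))
    (s : Finset ℕ) :
    s ⊆ Finset.Icc 1 ℓ →
    ∫⁻ ω, (∏ j ∈ Finset.Icc 1 ℓ \ s,
        ENNReal.ofReal (Real.exp (-(γ * max (∑ k ∈ Finset.Icc (a j + 1) (n + 1), T k ω) 0))))
      * ∏ j ∈ s, (if (∑ k ∈ Finset.Icc (a j + 1) (n + 1), T k ω) < C (a j) ω
          then (1:ℝ≥0∞) else 0) ∂ℙ
      = ∫⁻ ω, ∏ j ∈ Finset.Icc 1 ℓ,
          ENNReal.ofReal (Real.exp (-(γ * max (∑ k ∈ Finset.Icc (a j + 1) (n + 1), T k ω) 0))) ∂ℙ := by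
  classical
  have hZmeas : ∀ x : ℕ ⊕ ℕ, Measurable ((Sum.elim T C : ℕ ⊕ ℕ → Ω → ℝ) x) := by
    rintro (k | j)
    · exact hTmeas k
    · exact hCmeas j
  have hsummeas : ∀ b c : ℕ,
      Measurable (fun w : (ℕ ⊕ ℕ) → ℝ => ∑ k ∈ Finset.Icc b c, w (Sum.inl k)) :=
    fun b c => Finset.measurable_sum _ fun k _ => measurable_pi_apply _
  induction s using Finset.induction_on with
  | empty => intro _; simp
  | @insert i s hi ih =>
    intro hsub
    have hiIcc : i ∈ Finset.Icc 1 ℓ := hsub (Finset.mem_insert_self i s)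
    have hssub : s ⊆ Finset.Icc 1 ℓ := fun x hx => hsub (Finset.mem_insert_of_mem hx)
    set Sfin : Finset (ℕ ⊕ ℕ) :=
      (Finset.Icc (a 1 + 1) (n + 1)).image Sum.inl
        ∪ ((Finset.Icc 1 ℓ).erase i).image (fun j => Sum.inr (a j)) with hSfin
    set W : Ω → (ℕ ⊕ ℕ) → ℝ :=
      fun ω x => if x ∈ Sfin then (Sum.elim T C : ℕ ⊕ ℕ → Ω → ℝ) x ω else 0 with hWdef
    set F : ((ℕ ⊕ ℕ) → ℝ) → ℝ≥0∞ := fun w =>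
      (∏ j ∈ Finset.Icc 1 ℓ \ insert i s,
        ENNReal.ofReal (Real.exp (-(γ * max (∑ k ∈ Finset.Icc (a j + 1) (n + 1),
          w (Sum.inl k)) 0))))
      * ∏ j ∈ s, (if (∑ k ∈ Finset.Icc (a j + 1) (n + 1), w (Sum.inl k)) < w (Sum.inr (a j))
          then (1:ℝ≥0∞) else 0) with hFdef
    set g : ((ℕ ⊕ ℕ) → ℝ) → ℝ :=
      fun w => ∑ k ∈ Finset.Icc (a i + 1) (n + 1), w (Sum.inl k) with hgdef
    -- coordinates of W
    have hWT : ∀ (ω : Ω), ∀ j ∈ Finset.Icc 1 ℓ, ∀ k ∈ Finset.Icc (a j + 1) (n + 1),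
        W ω (Sum.inl k) = T k ω := by
      intro ω j hj k hk
      have hkK : k ∈ Finset.Icc (a 1 + 1) (n + 1) := by
        rw [recovery_Icc_filter_eq hmono hℓ hj] at hk
        exact (Finset.mem_filter.mp hk).1
      have hmem : Sum.inl k ∈ Sfin := by
        rw [hSfin]
        exact Finset.mem_union_left _ (Finset.mem_image_of_mem _ hkK)
      simp only [hWdef, if_pos hmem, Sum.elim_inl]
    have hWC : ∀ (ω : Ω), ∀ j ∈ s, W ω (Sum.inr (a j)) = C (a j) ω := by
      intro ω j hj
      have hmem : Sum.inr (a j) ∈ Sfin := by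
        rw [hSfin]
        refine Finset.mem_union_right _ (Finset.mem_image_of_mem _ ?_)
        exact Finset.mem_erase.mpr ⟨fun h => hi (h ▸ hj), hssub hj⟩
      simp only [hWdef, if_pos hmem, Sum.elim_inr]
    -- measurability
    have hWmeas : Measurable W := by
      apply measurable_pi_lambda
      intro x
      by_cases hx : x ∈ Sfin
      · simp only [hWdef, if_pos hx]
        exact hZmeas x
      · simp only [hWdef, if_neg hx]
        exact measurable_const
    have hgmeas : Measurable g := hsummeas (a i + 1) (n + 1)
    have hFmeas : Measurable F := by
      apply Measurable.mul
      · apply Finset.measurable_prod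
        intro j _
        apply Measurable.ennreal_ofReal
        apply Real.measurable_exp.comp
        exact (((hsummeas _ _).max measurable_const).const_mul γ).neg
      · apply Finset.measurable_prod
        intro j _
        exact Measurable.ite (measurableSet_lt (hsummeas _ _) (measurable_pi_apply _))
          measurable_const measurable_const
    -- independence
    have hindWX : IndepFun W (C (a i)) ℙ := by
      have hd : Disjoint Sfin ({Sum.inr (a i)} : Finset (ℕ ⊕ ℕ)) := by
        rw [Finset.disjoint_singleton_right, hSfin]
        simp only [Finset.mem_union, Finset.mem_image, Finset.mem_erase, not_or, not_exists,
          not_and]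
        constructor
        · intro k hk hke
          simp at hke
        · intro j hj hje
          have haji : a j = a i := Sum.inr_injective hje
          have hjIcc := Finset.mem_Icc.mp hj.2
          have : j = i := hmono.injOn (Set.mem_Icc.mpr hjIcc)
            (Set.mem_Icc.mpr (Finset.mem_Icc.mp hiIcc)) haji
          exact hj.1 this
      have base := recovery_indep_extend hZmeas hindep Sfin {Sum.inr (a i)} hd
      have h2 := base.comp measurable_id (measurable_pi_apply (Sum.inr (a i)))
      have hXeq : ((fun x : (ℕ ⊕ ℕ) → ℝ => x (Sum.inr (a i)))
          ∘ (fun ω x => if x ∈ ({Sum.inr (a i)} : Finset (ℕ ⊕ ℕ))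
              then (Sum.elim T C : ℕ ⊕ ℕ → Ω → ℝ) x ω else 0)) = C (a i) := by
        funext ω
        simp
      rw [hXeq] at h2
      exact h2
    -- peel
    have hpeel := recovery_peelC (μ := (ℙ : Measure Ω)) hγ (hCmeas (a i)) hWmeas
      (hCdist (a i)) hindWX hFmeas hgmeas
    have hFW : ∀ ω : Ω, F (W ω)
        = (∏ j ∈ Finset.Icc 1 ℓ \ insert i s,
            ENNReal.ofReal (Real.exp (-(γ * max (∑ k ∈ Finset.Icc (a j + 1) (n + 1),
              T k ω) 0))))
          * ∏ j ∈ s, (if (∑ k ∈ Finset.Icc (a j + 1) (n + 1), T k ω) < C (a j) ω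
              then (1:ℝ≥0∞) else 0) := by
      intro ω
      have h1 : (∏ j ∈ Finset.Icc 1 ℓ \ insert i s,
          ENNReal.ofReal (Real.exp (-(γ * max (∑ k ∈ Finset.Icc (a j + 1) (n + 1),
            W ω (Sum.inl k)) 0))))
          = ∏ j ∈ Finset.Icc 1 ℓ \ insert i s,
          ENNReal.ofReal (Real.exp (-(γ * max (∑ k ∈ Finset.Icc (a j + 1) (n + 1),
            T k ω) 0))) :=
        Finset.prod_congr rfl fun j hj => by
          rw [Finset.sum_congr rfl fun k hk => hWT ω j (Finset.mem_sdiff.mp hj).1 k hk]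
      have h2 : (∏ j ∈ s, (if (∑ k ∈ Finset.Icc (a j + 1) (n + 1), W ω (Sum.inl k))
            < W ω (Sum.inr (a j)) then (1:ℝ≥0∞) else 0))
          = ∏ j ∈ s, (if (∑ k ∈ Finset.Icc (a j + 1) (n + 1), T k ω) < C (a j) ω
            then (1:ℝ≥0∞) else 0) :=
        Finset.prod_congr rfl fun j hj => by
          rw [Finset.sum_congr rfl fun k hk => hWT ω j (hssub hj) k hk, hWC ω j hj]
      exact congrArg₂ (· * ·) h1 h2
    have hgW : ∀ ω : Ω, g (W ω) = ∑ k ∈ Finset.Icc (a i + 1) (n + 1), T k ω := by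
      intro ω
      rw [hgdef]
      exact Finset.sum_congr rfl fun k hk => hWT ω i hiIcc k hk
    have hL : ∫⁻ ω, (∏ j ∈ Finset.Icc 1 ℓ \ insert i s,
          ENNReal.ofReal (Real.exp (-(γ * max (∑ k ∈ Finset.Icc (a j + 1) (n + 1), T k ω) 0))))
        * ∏ j ∈ insert i s, (if (∑ k ∈ Finset.Icc (a j + 1) (n + 1), T k ω) < C (a j) ω
            then (1:ℝ≥0∞) else 0) ∂ℙ
        = ∫⁻ ω, F (W ω) * (if g (W ω) < C (a i) ω then 1 else 0) ∂ℙ := by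
      apply lintegral_congr
      intro ω
      rw [Finset.prod_insert hi, hFW ω, hgW ω]
      ring
    have hR : ∫⁻ ω, F (W ω) * ENNReal.ofReal (Real.exp (-(γ * max (g (W ω)) 0))) ∂ℙ
        = ∫⁻ ω, (∏ j ∈ Finset.Icc 1 ℓ \ s,
            ENNReal.ofReal (Real.exp (-(γ * max (∑ k ∈ Finset.Icc (a j + 1) (n + 1),
              T k ω) 0))))
          * ∏ j ∈ s, (if (∑ k ∈ Finset.Icc (a j + 1) (n + 1), T k ω) < C (a j) ω
              then (1:ℝ≥0∞) else 0) ∂ℙ := by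
      apply lintegral_congr
      intro ω
      rw [hFW ω, hgW ω]
      have hmem : i ∈ Finset.Icc 1 ℓ \ s := Finset.mem_sdiff.mpr ⟨hiIcc, hi⟩
      rw [Finset.sdiff_insert, ← Finset.mul_prod_erase _ _ hmem]
      ring
    exact hL.trans (hpeel.trans (hR.trans (ih hssub)))

lemma recovery_claim2
    {Ω : Type*} [MeasureSpace Ω] [IsProbabilityMeasure (ℙ : Measure Ω)]
    (T : ℕ → Ω → ℝ) (C : ℕ → Ω → ℝ)
    (hTmeas : ∀ k, Measurable (T k)) (hCmeas : ∀ j, Measurable (C j))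
    (hindep : iIndepFun
      (Sum.elim T C : ℕ ⊕ ℕ → Ω → ℝ) ℙ)
    (hTdist : ∀ k, Measure.map (T k) ℙ = expMeasure 1)
    (c : ℕ → ℝ) (hc : ∀ k, 0 ≤ c k) (s : Finset ℕ) :
    ∫⁻ ω, ∏ k ∈ s, ENNReal.ofReal (Real.exp (-(c k * max (T k ω) 0))) ∂ℙ
      = ∏ k ∈ s, ENNReal.ofReal ((1 + c k)⁻¹) := by
  classical
  have hZmeas : ∀ x : ℕ ⊕ ℕ, Measurable ((Sum.elim T C : ℕ ⊕ ℕ → Ω → ℝ) x) := by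
    rintro (k | j)
    · exact hTmeas k
    · exact hCmeas j
  have hfac : ∀ k, Measurable
      (fun ω => ENNReal.ofReal (Real.exp (-(c k * max (T k ω) 0)))) := fun k =>
    (Real.measurable_exp.comp
      ((((hTmeas k).max measurable_const).const_mul (c k)).neg)).ennreal_ofReal
  induction s using Finset.induction_on with
  | empty => simp
  | @insert k0 s hk0 ih =>
    have hd : Disjoint (s.image Sum.inl) ({Sum.inl k0} : Finset (ℕ ⊕ ℕ)) := by
      simp only [Finset.disjoint_singleton_right, Finset.mem_image, Sum.inl.injEq,
        not_exists, not_and]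
      intro x hx hxe
      exact hk0 (hxe ▸ hx)
    have base := recovery_indep_extend hZmeas hindep (s.image Sum.inl) {Sum.inl k0} hd
    have hG1 : Measurable (fun w : (ℕ ⊕ ℕ) → ℝ =>
        ∏ k ∈ s, ENNReal.ofReal (Real.exp (-(c k * max (w (Sum.inl k)) 0)))) :=
      Finset.measurable_prod _ fun k _ => by fun_prop
    have hG2 : Measurable (fun w : (ℕ ⊕ ℕ) → ℝ =>
        ENNReal.ofReal (Real.exp (-(c k0 * max (w (Sum.inl k0)) 0)))) := by
      fun_prop
    have hcomp := base.comp hG1 hG2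
    have he1 : ((fun w : (ℕ ⊕ ℕ) → ℝ =>
          ∏ k ∈ s, ENNReal.ofReal (Real.exp (-(c k * max (w (Sum.inl k)) 0))))
        ∘ (fun ω x => if x ∈ s.image Sum.inl
            then (Sum.elim T C : ℕ ⊕ ℕ → Ω → ℝ) x ω else 0))
        = fun ω => ∏ k ∈ s, ENNReal.ofReal (Real.exp (-(c k * max (T k ω) 0))) := by
      funext ω
      simp only [Function.comp_apply]
      refine Finset.prod_congr rfl fun k hk => ?_
      rw [if_pos (Finset.mem_image_of_mem _ hk)]
      rfl
    have he2 : ((fun w : (ℕ ⊕ ℕ) → ℝ =>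
          ENNReal.ofReal (Real.exp (-(c k0 * max (w (Sum.inl k0)) 0))))
        ∘ (fun ω x => if x ∈ ({Sum.inl k0} : Finset (ℕ ⊕ ℕ))
            then (Sum.elim T C : ℕ ⊕ ℕ → Ω → ℝ) x ω else 0))
        = fun ω => ENNReal.ofReal (Real.exp (-(c k0 * max (T k0 ω) 0))) := by
      funext ω
      simp
    rw [he1, he2] at hcomp
    have hsplit := lintegral_mul_eq_lintegral_mul_lintegral_of_indepFun''
      (μ := (ℙ : Measure Ω)) (hfac k0).aemeasurable
      (Finset.measurable_prod s (fun k _ => hfac k)).aemeasurable hcomp.symm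
    have hint : ∫⁻ ω, ENNReal.ofReal (Real.exp (-(c k0 * max (T k0 ω) 0))) ∂ℙ
        = ENNReal.ofReal ((1 + c k0)⁻¹) := by
      have hmeas : Measurable fun x : ℝ => ENNReal.ofReal (Real.exp (-(c k0 * max x 0))) :=
        (Real.measurable_exp.comp
          (((measurable_id'.max measurable_const).const_mul (c k0)).neg)).ennreal_ofReal
      rw [← recovery_expInt (hc k0), ← hTdist k0]
      exact (lintegral_map hmeas (hTmeas k0)).symm
    calc ∫⁻ ω, ∏ k ∈ insert k0 s,
          ENNReal.ofReal (Real.exp (-(c k * max (T k ω) 0))) ∂ℙ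
        = ∫⁻ ω, ENNReal.ofReal (Real.exp (-(c k0 * max (T k0 ω) 0)))
            * ∏ k ∈ s, ENNReal.ofReal (Real.exp (-(c k * max (T k ω) 0))) ∂ℙ :=
          lintegral_congr fun ω => by rw [Finset.prod_insert hk0]
      _ = (∫⁻ ω, ENNReal.ofReal (Real.exp (-(c k0 * max (T k0 ω) 0))) ∂ℙ)
            * ∫⁻ ω, ∏ k ∈ s, ENNReal.ofReal (Real.exp (-(c k * max (T k ω) 0))) ∂ℙ := hsplit
      _ = ENNReal.ofReal ((1 + c k0)⁻¹) * ∏ k ∈ s, ENNReal.ofReal ((1 + c k)⁻¹) := by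
          rw [hint, ih]
      _ = ∏ k ∈ insert k0 s, ENNReal.ofReal ((1 + c k)⁻¹) :=
          (Finset.prod_insert (f := fun k => ENNReal.ofReal ((1 + c k)⁻¹)) hk0).symm

end RecoveryClaims


open scoped ENNReal

/-- In FPP with recovery on the semi-line, for a subset
`A = {a 1 < a 2 < ⋯ < a ℓ} ⊆ {1,…,n}` with the convention `a (ℓ+1) = n+1`,
the probability that every clock `C (a j)` exceeds `∑_{k=a j+1}^{n+1} T k`
equals `∏_{j=1}^ℓ (1 + jγ)^{-(a (j+1) - a j)}`. -/
theorem recovery_event_probability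
    {Ω : Type*} [MeasureSpace Ω] [IsProbabilityMeasure (ℙ : Measure Ω)]
    (γ : ℝ) (hγ : 0 < γ)
    (T : ℕ → Ω → ℝ) (C : ℕ → Ω → ℝ)
    (hTmeas : ∀ k, Measurable (T k)) (hCmeas : ∀ j, Measurable (C j))
    (hindep : iIndepFun
      (Sum.elim T C : ℕ ⊕ ℕ → Ω → ℝ) ℙ)
    (hTdist : ∀ k, Measure.map (T k) ℙ = expMeasure 1)
    (hCdist : ∀ j, Measure.map (C j) ℙ = expMeasure γ)
    (n ℓ : ℕ) (hℓ : 1 ≤ ℓ) (a : ℕ → ℕ)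
    (hmono : StrictMonoOn a (Set.Icc 1 ℓ))
    (ha1 : 1 ≤ a 1) (han : a ℓ ≤ n) (hatop : a (ℓ + 1) = n + 1) :
    ℙ {ω | ∀ j ∈ Finset.Icc 1 ℓ,
        (∑ k ∈ Finset.Icc (a j + 1) (n + 1), T k ω) < C (a j) ω}
      = ENNReal.ofReal
          (∏ j ∈ Finset.Icc 1 ℓ, ((1 + (j : ℝ) * γ) ^ (a (j + 1) - a j))⁻¹) := by
  classical
  have hSmeas : ∀ j, Measurable (fun ω => ∑ k ∈ Finset.Icc (a j + 1) (n + 1), T k ω) :=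
    fun j => Finset.measurable_sum _ fun k _ => hTmeas k
  -- notation for the multiplicity
  set m : ℕ → ℕ := fun k => ((Finset.Icc 1 ℓ).filter (fun j => a j < k)).card with hmdef
  have hcnonneg : ∀ k, (0:ℝ) ≤ (m k : ℝ) * γ := fun k => mul_nonneg (Nat.cast_nonneg _) hγ.le
  -- step 0 : probability as the integral of a product of indicators
  have hEset : {ω : Ω | ∀ j ∈ Finset.Icc 1 ℓ,
        (∑ k ∈ Finset.Icc (a j + 1) (n + 1), T k ω) < C (a j) ω}
      = ⋂ j ∈ (Finset.Icc 1 ℓ : Finset ℕ),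
          {ω : Ω | (∑ k ∈ Finset.Icc (a j + 1) (n + 1), T k ω) < C (a j) ω} := by
    ext ω
    simp
  have hEmeas : MeasurableSet {ω : Ω | ∀ j ∈ Finset.Icc 1 ℓ,
      (∑ k ∈ Finset.Icc (a j + 1) (n + 1), T k ω) < C (a j) ω} := by
    rw [hEset]
    exact MeasurableSet.biInter (Set.to_countable _)
      fun j _ => measurableSet_lt (hSmeas j) (hCmeas (a j))
  have step0 : ℙ {ω | ∀ j ∈ Finset.Icc 1 ℓ,
        (∑ k ∈ Finset.Icc (a j + 1) (n + 1), T k ω) < C (a j) ω}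
      = ∫⁻ ω, ∏ j ∈ Finset.Icc 1 ℓ,
          (if (∑ k ∈ Finset.Icc (a j + 1) (n + 1), T k ω) < C (a j) ω
            then (1:ℝ≥0∞) else 0) ∂ℙ := by
    rw [← lintegral_indicator_one hEmeas]
    apply lintegral_congr
    intro ω
    by_cases h : ω ∈ {ω : Ω | ∀ j ∈ Finset.Icc 1 ℓ,
        (∑ k ∈ Finset.Icc (a j + 1) (n + 1), T k ω) < C (a j) ω}
    · rw [Set.indicator_of_mem h]
      have h' : ∀ j ∈ Finset.Icc 1 ℓ,
          (∑ k ∈ Finset.Icc (a j + 1) (n + 1), T k ω) < C (a j) ω := h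
      exact (Finset.prod_eq_one fun j hj => if_pos (h' j hj)).symm
    · rw [Set.indicator_of_notMem h]
      have h' : ¬ ∀ j ∈ Finset.Icc 1 ℓ,
          (∑ k ∈ Finset.Icc (a j + 1) (n + 1), T k ω) < C (a j) ω := h
      push_neg at h'
      obtain ⟨j, hj, hle⟩ := h'
      refine (Finset.prod_eq_zero hj ?_).symm
      exact if_neg (not_lt.mpr hle)
  -- step 1 : peel off the clocks
  have step1 := recovery_claim1 γ hγ T C hTmeas hCmeas hindep hCdist n ℓ hℓ a hmono
    (Finset.Icc 1 ℓ) (subset_refl _)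
  rw [Finset.sdiff_self] at step1
  simp only [Finset.prod_empty, one_mul] at step1
  -- a.e. nonnegativity of the passage times
  have hTae : ∀ᵐ ω ∂(ℙ : Measure Ω), ∀ k ∈ Finset.Icc (a 1 + 1) (n + 1), 0 ≤ T k ω := by
    rw [Filter.eventually_all_finset]
    intro k _
    have h0 : (ℙ : Measure Ω) (T k ⁻¹' Set.Iio 0) = 0 := by
      rw [← Measure.map_apply (hTmeas k) measurableSet_Iio, hTdist k]
      exact recovery_expMeasure_Iio_zero 1
    have hset : {ω : Ω | ¬ 0 ≤ T k ω} = T k ⁻¹' Set.Iio 0 := by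
      ext ω
      simp [not_le]
    rw [MeasureTheory.ae_iff, hset]
    exact h0
  -- step 2 : rewrite the integrand a.e. as a product over edges
  have step2 : ∫⁻ ω, ∏ j ∈ Finset.Icc 1 ℓ,
        ENNReal.ofReal (Real.exp (-(γ * max (∑ k ∈ Finset.Icc (a j + 1) (n + 1), T k ω) 0))) ∂ℙ
      = ∫⁻ ω, ∏ k ∈ Finset.Icc (a 1 + 1) (n + 1),
          ENNReal.ofReal (Real.exp (-((m k : ℝ) * γ * max (T k ω) 0))) ∂ℙ := by
    apply lintegral_congr_ae
    filter_upwards [hTae] with ω hω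
    have hS0 : ∀ j ∈ Finset.Icc 1 ℓ,
        0 ≤ ∑ k ∈ Finset.Icc (a j + 1) (n + 1), T k ω := by
      intro j hj
      apply Finset.sum_nonneg
      intro k hk
      apply hω
      rw [recovery_Icc_filter_eq hmono hℓ hj] at hk
      exact (Finset.mem_filter.mp hk).1
    have hL1 : ∏ j ∈ Finset.Icc 1 ℓ,
        ENNReal.ofReal (Real.exp (-(γ * max (∑ k ∈ Finset.Icc (a j + 1) (n + 1), T k ω) 0)))
        = ENNReal.ofReal (Real.exp (∑ j ∈ Finset.Icc 1 ℓ,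
            -(γ * ∑ k ∈ Finset.Icc (a j + 1) (n + 1), T k ω))) := by
      rw [Real.exp_sum, ENNReal.ofReal_prod_of_nonneg (fun j _ => (Real.exp_pos _).le)]
      exact (Finset.prod_congr rfl fun j hj => by rw [max_eq_left (hS0 j hj)]).symm
    have hR1 : ∏ k ∈ Finset.Icc (a 1 + 1) (n + 1),
        ENNReal.ofReal (Real.exp (-((m k : ℝ) * γ * max (T k ω) 0)))
        = ENNReal.ofReal (Real.exp (∑ k ∈ Finset.Icc (a 1 + 1) (n + 1),
            -((m k : ℝ) * γ * T k ω))) := by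
      rw [Real.exp_sum, ENNReal.ofReal_prod_of_nonneg (fun k _ => (Real.exp_pos _).le)]
      exact (Finset.prod_congr rfl fun k hk => by rw [max_eq_left (hω k hk)]).symm
    have hkey : ∑ j ∈ Finset.Icc 1 ℓ,
        -(γ * ∑ k ∈ Finset.Icc (a j + 1) (n + 1), T k ω)
        = ∑ k ∈ Finset.Icc (a 1 + 1) (n + 1), -((m k : ℝ) * γ * T k ω) := by
      rw [Finset.sum_neg_distrib, ← Finset.mul_sum,
        recovery_sum_S_eq hmono hℓ (fun k => T k ω), Finset.mul_sum,
        ← Finset.sum_neg_distrib]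
      exact Finset.sum_congr rfl fun k _ => by rw [hmdef]; ring
    rw [hL1, hR1, hkey]
  -- step 3 : independence of the passage times
  have step3 := recovery_claim2 T C hTmeas hCmeas hindep hTdist
    (fun k => (m k : ℝ) * γ) hcnonneg (Finset.Icc (a 1 + 1) (n + 1))
  -- step 4 : regroup the product
  have step4 : ∏ k ∈ Finset.Icc (a 1 + 1) (n + 1), ENNReal.ofReal ((1 + (m k : ℝ) * γ)⁻¹)
      = ENNReal.ofReal
          (∏ j ∈ Finset.Icc 1 ℓ, ((1 + (j : ℝ) * γ) ^ (a (j + 1) - a j))⁻¹) := by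
    rw [← ENNReal.ofReal_prod_of_nonneg
      (fun k _ => inv_nonneg.mpr (by linarith [hcnonneg k]))]
    congr 1
    have hre := recovery_prod_regroup (M := ℝ) hmono hℓ han hatop
      (fun j => (1 + (j : ℝ) * γ)⁻¹)
    rw [hmdef]
    rw [hre]
    exact Finset.prod_congr rfl fun j _ => inv_pow _ _
  calc ℙ {ω | ∀ j ∈ Finset.Icc 1 ℓ,
        (∑ k ∈ Finset.Icc (a j + 1) (n + 1), T k ω) < C (a j) ω}
      = ∫⁻ ω, ∏ j ∈ Finset.Icc 1 ℓ,
          (if (∑ k ∈ Finset.Icc (a j + 1) (n + 1), T k ω) < C (a j) ω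
            then (1:ℝ≥0∞) else 0) ∂ℙ := step0
    _ = ∫⁻ ω, ∏ j ∈ Finset.Icc 1 ℓ,
          ENNReal.ofReal (Real.exp (-(γ * max (∑ k ∈ Finset.Icc (a j + 1) (n + 1),
            T k ω) 0))) ∂ℙ := step1
    _ = ∫⁻ ω, ∏ k ∈ Finset.Icc (a 1 + 1) (n + 1),
          ENNReal.ofReal (Real.exp (-((m k : ℝ) * γ * max (T k ω) 0))) ∂ℙ := step2
    _ = ∏ k ∈ Finset.Icc (a 1 + 1) (n + 1), ENNReal.ofReal ((1 + (m k : ℝ) * γ)⁻¹) := step3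
    _ = ENNReal.ofReal
          (∏ j ∈ Finset.Icc 1 ℓ, ((1 + (j : ℝ) * γ) ^ (a (j + 1) - a j))⁻¹) := step4
end

section
/- Fix $\gamma > 0$. For $n, \ell \geq 1$ let $N_\ell^n = \{\mathbf{x} \in (\mathbb{N}^*)^\ell : \sum_k \mathbf{x}_k \leq n\}$ and $S_\ell(n) = \sum_{\mathbf{x} \in N_\ell^n} \prod_{k=1}^\ell (1+k\gamma)^{-\mathbf{x}_k}$, and set $\nu_n = 1 + \sum_{\ell=1}^n (-1)^\ell S_\ell(n)$. Then $\nu_n \to e^{-1/\gamma}$ as $n \to \infty$. -/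
open Filter Real Topology

set_option maxHeartbeats 1000000

private lemma geom_hasSum {c : ℝ} (hc : 0 < c) :
    HasSum (fun x : ℕ+ => ((1 + c)⁻¹ : ℝ) ^ (x : ℕ)) c⁻¹ := by
  have h1 : (0:ℝ) < 1 + c := by linarith
  have hq0 : (0:ℝ) ≤ (1+c)⁻¹ := by positivity
  have hq1 : ((1+c)⁻¹ : ℝ) < 1 := by
    rw [inv_lt_one_iff₀]; right; linarith
  have hgeo := hasSum_geometric_of_lt_one hq0 hq1
  have h2 : HasSum (fun n : ℕ => ((1+c)⁻¹:ℝ) ^ (n+1)) ((1+c)⁻¹ * (1 - (1+c)⁻¹)⁻¹) := by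
    simpa [pow_succ, mul_comm] using hgeo.mul_left ((1+c)⁻¹)
  have key : ((1+c)⁻¹:ℝ) * (1 - (1+c)⁻¹)⁻¹ = c⁻¹ := by
    have h2' : (1:ℝ) - (1+c)⁻¹ = c / (1+c) := by field_simp; ring
    rw [h2']; field_simp
  rw [key] at h2
  refine (Equiv.hasSum_iff (Equiv.pnatEquivNat.symm)).mp ?_
  have : ((fun x : ℕ+ => ((1 + c)⁻¹ : ℝ) ^ (x : ℕ)) ∘ Equiv.pnatEquivNat.symm)
      = fun n : ℕ => ((1+c)⁻¹:ℝ) ^ (n+1) := by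
    funext n
    simp [Equiv.pnatEquivNat, Function.comp]
  rw [this]; exact h2

private lemma hasSum_pi {ℓ : ℕ} (g : Fin ℓ → ℕ+ → ℝ) (a : Fin ℓ → ℝ)
    (hg : ∀ k, HasSum (g k) (a k)) (hpos : ∀ k x, 0 ≤ g k x) :
    HasSum (fun x : Fin ℓ → ℕ+ => ∏ k, g k (x k)) (∏ k, a k) := by
  induction ℓ with
  | zero =>
    have h1 : (fun x : Fin 0 → ℕ+ => ∏ k, g k (x k)) = fun _ => (1:ℝ) := by
      funext x; simp
    rw [h1, Finset.univ_eq_empty, Finset.prod_empty]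
    exact hasSum_single (f := fun _ : Fin 0 → ℕ+ => (1:ℝ)) default
      (fun b hb => absurd (Subsingleton.elim b default) hb)
  | succ m ih =>
    set G : (Fin m → ℕ+) → ℝ := fun x => ∏ k, g k.succ (x k) with hGdef
    have hG : HasSum G (∏ k : Fin m, a k.succ) :=
      ih (fun k : Fin m => g k.succ) (fun k : Fin m => a k.succ) (fun k => hg _)
        (fun k x => hpos _ _)
    have hGn : (0 : (Fin m → ℕ+) → ℝ) ≤ G :=
      fun x => Finset.prod_nonneg fun k _ => hpos _ _
    have hfn : (0 : ℕ+ → ℝ) ≤ g 0 := fun x => hpos 0 x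
    have hsum2 : Summable (fun p : ℕ+ × (Fin m → ℕ+) => g 0 p.1 * G p.2) :=
      Summable.mul_of_nonneg (hg 0).summable hG.summable hfn hGn
    have hmul := (hg 0).mul hG hsum2
    refine ((Fin.consEquiv (fun _ : Fin (m+1) => ℕ+)).hasSum_iff).mp ?_
    have hfe : ((fun x : Fin (m+1) → ℕ+ => ∏ k, g k (x k)) ∘ (Fin.consEquiv fun _ => ℕ+))
        = fun p : ℕ+ × (Fin m → ℕ+) => g 0 p.1 * G p.2 := by
      funext p
      simp [hGdef, Fin.consEquiv, Function.comp, Fin.prod_univ_succ]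
    rw [hfe, Fin.prod_univ_succ]
    exact hmul

private noncomputable def hfun (γ : ℝ) (ℓ : ℕ) (x : Fin ℓ → ℕ+) : ℝ :=
  ∏ k : Fin ℓ, ((1 + ((k : ℕ) + 1 : ℝ) * γ)⁻¹) ^ ((x k : ℕ))

private noncomputable def Aval (γ : ℝ) (ℓ : ℕ) : ℝ :=
  ∏ k : Fin ℓ, (((k : ℕ) + 1 : ℝ) * γ)⁻¹

private noncomputable def Ffun (γ : ℝ) (ℓ n : ℕ) : ℝ :=
  ∑' x : Fin ℓ → ℕ+, if (∑ i : Fin ℓ, (x i : ℕ)) ≤ n then hfun γ ℓ x else 0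

private lemma hfun_nonneg {γ : ℝ} (hγ : 0 < γ) (ℓ : ℕ) (x : Fin ℓ → ℕ+) :
    0 ≤ hfun γ ℓ x :=
  Finset.prod_nonneg fun k _ => pow_nonneg (by positivity) _

private lemma hasSum_hfun {γ : ℝ} (hγ : 0 < γ) (ℓ : ℕ) :
    HasSum (hfun γ ℓ) (Aval γ ℓ) := by
  exact hasSum_pi (fun k x => ((1 + ((k : ℕ) + 1 : ℝ) * γ)⁻¹) ^ (x : ℕ))
    (fun k => (((k : ℕ) + 1 : ℝ) * γ)⁻¹)
    (fun k => geom_hasSum (by positivity))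
    (fun k x => by positivity)

private lemma Aval_eq {γ : ℝ} (hγ : 0 < γ) (ℓ : ℕ) :
    Aval γ ℓ = (γ⁻¹) ^ ℓ / (Nat.factorial ℓ : ℝ) := by
  induction ℓ with
  | zero => simp [Aval]
  | succ m ih =>
    rw [Aval, Fin.prod_univ_castSucc]
    simp only [Fin.coe_castSucc, Fin.val_last]
    have ih' : (∏ k : Fin m, ((((k : ℕ) : ℝ) + 1) * γ)⁻¹)
        = (γ⁻¹) ^ m / (Nat.factorial m : ℝ) := ih
    rw [ih']
    have hm : ((Nat.factorial (m+1) : ℕ) : ℝ) = ((m:ℝ)+1) * (Nat.factorial m : ℝ) := by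
      push_cast [Nat.factorial_succ]; ring
    rw [hm]
    have h1 : (Nat.factorial m : ℝ) ≠ 0 := by positivity
    have hγ0 : γ ≠ 0 := hγ.ne'
    field_simp
    ring_nf
    rw [mul_inv_cancel₀ hγ0, one_mul]

private lemma Ffun_rep {γ : ℝ} (ℓ n : ℕ) :
    Ffun γ ℓ n = ∑ x ∈ Finset.filter (fun x : Fin ℓ → ℕ+ => (∑ i, (x i : ℕ)) ≤ n)
      (Fintype.piFinset fun _ => Finset.Icc 1 (⟨n+1, n.succ_pos⟩ : ℕ+)), hfun γ ℓ x := by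
  classical
  have hmem : ∀ x : Fin ℓ → ℕ+, x ∈ Finset.filter (fun x : Fin ℓ → ℕ+ => (∑ i, (x i : ℕ)) ≤ n)
      (Fintype.piFinset fun _ => Finset.Icc 1 (⟨n+1, n.succ_pos⟩ : ℕ+)) ↔
      (∑ i, (x i : ℕ)) ≤ n := by
    intro x
    constructor
    · exact fun hx => (Finset.mem_filter.mp hx).2
    · intro hx
      refine Finset.mem_filter.mpr ⟨Fintype.mem_piFinset.mpr fun i => ?_, hx⟩
      refine Finset.mem_Icc.mpr ⟨(x i).one_le, ?_⟩
      have h1 : (x i : ℕ) ≤ ∑ j, (x j : ℕ) :=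
        Finset.single_le_sum (f := fun j => ((x j : ℕ))) (fun j _ => Nat.zero_le _)
          (Finset.mem_univ i)
      have h2 : (x i : ℕ) ≤ n + 1 := le_trans h1 (le_trans hx (Nat.le_succ n))
      exact (PNat.coe_le_coe _ _).mp h2
  rw [Ffun, tsum_eq_sum (s := Finset.filter (fun x : Fin ℓ → ℕ+ => (∑ i, (x i : ℕ)) ≤ n)
      (Fintype.piFinset fun _ => Finset.Icc 1 (⟨n+1, n.succ_pos⟩ : ℕ+)))
      (fun x hx => if_neg (fun hc => hx ((hmem x).mpr hc)))]
  exact Finset.sum_congr rfl fun x hx => if_pos ((hmem x).mp hx)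

private lemma Ffun_nonneg {γ : ℝ} (hγ : 0 < γ) (ℓ n : ℕ) : 0 ≤ Ffun γ ℓ n := by
  rw [Ffun_rep]
  exact Finset.sum_nonneg fun x _ => hfun_nonneg hγ ℓ x

private lemma Ffun_le {γ : ℝ} (hγ : 0 < γ) (ℓ n : ℕ) : Ffun γ ℓ n ≤ Aval γ ℓ := by
  rw [Ffun_rep]
  exact sum_le_hasSum _ (fun x _ => hfun_nonneg hγ ℓ x) (hasSum_hfun hγ ℓ)

private lemma Ffun_zero {γ : ℝ} (ℓ n : ℕ) (hn : n < ℓ) : Ffun γ ℓ n = 0 := by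
  have hz : ∀ x : Fin ℓ → ℕ+, (if (∑ i, (x i : ℕ)) ≤ n then hfun γ ℓ x else 0) = 0 := by
    intro x
    rw [if_neg]
    intro hc
    have h1 : ℓ ≤ ∑ i, (x i : ℕ) := by
      calc ℓ = ∑ _i : Fin ℓ, 1 := by simp
      _ ≤ ∑ i, (x i : ℕ) := Finset.sum_le_sum fun i _ => (x i).2
    omega
  exact (tsum_congr hz).trans tsum_zero

private lemma Ffun_tendsto {γ : ℝ} (hγ : 0 < γ) (ℓ : ℕ) :
    Tendsto (fun n => Ffun γ ℓ n) atTop (𝓝 (Aval γ ℓ)) := by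
  classical
  set S : ℕ → Finset (Fin ℓ → ℕ+) := fun n =>
    Finset.filter (fun x : Fin ℓ → ℕ+ => (∑ i, (x i : ℕ)) ≤ n)
      (Fintype.piFinset fun _ => Finset.Icc 1 (⟨n+1, n.succ_pos⟩ : ℕ+)) with hS
  have hmemS : ∀ n (x : Fin ℓ → ℕ+), x ∈ S n ↔ (∑ i, (x i : ℕ)) ≤ n := by
    intro n x
    constructor
    · exact fun hx => (Finset.mem_filter.mp hx).2
    · intro hx
      refine Finset.mem_filter.mpr ⟨Fintype.mem_piFinset.mpr fun i => ?_, hx⟩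
      refine Finset.mem_Icc.mpr ⟨(x i).one_le, ?_⟩
      have h1 : (x i : ℕ) ≤ ∑ j, (x j : ℕ) :=
        Finset.single_le_sum (f := fun j => ((x j : ℕ))) (fun j _ => Nat.zero_le _)
          (Finset.mem_univ i)
      exact (PNat.coe_le_coe _ _).mp (le_trans h1 (le_trans hx (Nat.le_succ n)))
  have hmono : Monotone S := by
    intro n m hnm x hx
    rw [hmemS] at hx ⊢
    exact le_trans hx hnm
  have hexh : ∀ x : Fin ℓ → ℕ+, ∃ n, x ∈ S n :=
    fun x => ⟨∑ i, (x i : ℕ), (hmemS _ x).mpr le_rfl⟩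
  have hT : Tendsto S atTop atTop := tendsto_atTop_finset_of_monotone hmono hexh
  have hcomp : Tendsto ((fun s : Finset (Fin ℓ → ℕ+) => ∑ x ∈ s, hfun γ ℓ x) ∘ S)
      atTop (𝓝 (Aval γ ℓ)) := Tendsto.comp (hasSum_hfun hγ ℓ) hT
  exact hcomp.congr fun n => (Ffun_rep ℓ n).symm

/-- The complete recovery probabilities
`ν_n = 1 + ∑_{ℓ=1}^n (-1)^ℓ S_ℓ(n)`, where
`S_ℓ(n) = ∑_{x ∈ (ℕ*)^ℓ, ∑ x_k ≤ n} ∏_{k=1}^ℓ (1+kγ)^{-x_k}`,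
converge to `e^{-1/γ}` as `n → ∞`. -/
theorem nu_n_tendsto (γ : ℝ) (hγ : 0 < γ) :
    Tendsto (fun n : ℕ =>
        1 + ∑ ℓ ∈ Finset.Icc 1 n, (-1 : ℝ) ^ ℓ *
          (∑' x : Fin ℓ → ℕ+,
            if (∑ i : Fin ℓ, (x i : ℕ)) ≤ n then
              ∏ k : Fin ℓ, ((1 + ((k : ℕ) + 1 : ℝ) * γ) ^ ((x k : ℕ)))⁻¹
            else 0))
      atTop (nhds (Real.exp (-1 / γ))) := by
  classical
  -- Step 1: dominated convergence for the tsum form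
  have h1 : Tendsto (fun n => ∑' j : ℕ, (-1:ℝ)^(j+1) * Ffun γ (j+1) n) atTop
      (𝓝 (∑' j : ℕ, (-1:ℝ)^(j+1) * Aval γ (j+1))) := by
    apply tendsto_tsum_of_dominated_convergence (bound := fun j => Aval γ (j+1))
    · have hs : Summable (fun j : ℕ => (γ⁻¹)^(j+1) / (Nat.factorial (j+1) : ℝ)) :=
        (summable_nat_add_iff 1).mpr (Real.summable_pow_div_factorial γ⁻¹)
      exact hs.congr fun j => (Aval_eq hγ (j+1)).symm
    · intro j
      exact (Ffun_tendsto hγ (j+1)).const_mul _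
    · refine Eventually.of_forall fun n j => ?_
      rw [norm_mul, norm_pow, norm_neg, norm_one, one_pow, one_mul, Real.norm_eq_abs,
        abs_of_nonneg (Ffun_nonneg hγ (j+1) n)]
      exact Ffun_le hγ (j+1) n
  -- Step 2: identify the limit
  have h2 : (1:ℝ) + ∑' j : ℕ, (-1:ℝ)^(j+1) * Aval γ (j+1) = Real.exp (-1/γ) := by
    have hexp : Real.exp (-1/γ) = ∑' n : ℕ, (-1/γ)^n / (Nat.factorial n : ℝ) := by
      rw [Real.exp_eq_exp_ℝ, NormedSpace.exp_eq_tsum_div]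
    have hsum : Summable (fun n : ℕ => (-1/γ)^n / (Nat.factorial n : ℝ)) :=
      Real.summable_pow_div_factorial _
    rw [hexp, Summable.tsum_eq_zero_add hsum]
    have hterm : ∀ j : ℕ, (-1/γ)^(j+1) / (Nat.factorial (j+1) : ℝ)
        = (-1:ℝ)^(j+1) * Aval γ (j+1) := by
      intro j
      rw [Aval_eq hγ (j+1)]
      rw [neg_div, one_div, neg_pow]
      ring
    rw [tsum_congr hterm]
    simp
  -- Step 3: rewrite ν_n
  have hgoal : ∀ n : ℕ,
      (1 + ∑ ℓ ∈ Finset.Icc 1 n, (-1 : ℝ) ^ ℓ *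
          (∑' x : Fin ℓ → ℕ+,
            if (∑ i : Fin ℓ, (x i : ℕ)) ≤ n then
              ∏ k : Fin ℓ, ((1 + ((k : ℕ) + 1 : ℝ) * γ) ^ ((x k : ℕ)))⁻¹
            else 0))
      = 1 + ∑' j : ℕ, (-1:ℝ)^(j+1) * Ffun γ (j+1) n := by
    intro n
    congr 1
    have hIcc : Finset.Icc 1 n = (Finset.range n).map ⟨Nat.succ, Nat.succ_injective⟩ := by
      ext a
      simp only [Finset.mem_Icc, Finset.mem_map, Finset.mem_range,
        Function.Embedding.coeFn_mk]
      constructor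
      · rintro ⟨h1, h2⟩; exact ⟨a - 1, by omega, by omega⟩
      · rintro ⟨j, hj, rfl⟩; omega
    have hFeq : ∀ ℓ : ℕ, (∑' x : Fin ℓ → ℕ+,
        if (∑ i : Fin ℓ, (x i : ℕ)) ≤ n then
          ∏ k : Fin ℓ, ((1 + ((k : ℕ) + 1 : ℝ) * γ) ^ ((x k : ℕ)))⁻¹
        else 0) = Ffun γ ℓ n := by
      intro ℓ
      rw [Ffun]
      refine tsum_congr fun x => ?_
      refine if_congr Iff.rfl ?_ rfl
      rw [hfun]
      exact Finset.prod_congr rfl fun k _ => (inv_pow _ _).symm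
    calc ∑ ℓ ∈ Finset.Icc 1 n, (-1 : ℝ) ^ ℓ *
          (∑' x : Fin ℓ → ℕ+,
            if (∑ i : Fin ℓ, (x i : ℕ)) ≤ n then
              ∏ k : Fin ℓ, ((1 + ((k : ℕ) + 1 : ℝ) * γ) ^ ((x k : ℕ)))⁻¹
            else 0)
        = ∑ ℓ ∈ Finset.Icc 1 n, (-1 : ℝ) ^ ℓ * Ffun γ ℓ n :=
          Finset.sum_congr rfl fun ℓ _ => by rw [hFeq ℓ]
      _ = ∑ j ∈ Finset.range n, (-1 : ℝ) ^ (j+1) * Ffun γ (j+1) n := by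
          rw [hIcc, Finset.sum_map]
          rfl
      _ = ∑' j : ℕ, (-1:ℝ)^(j+1) * Ffun γ (j+1) n := by
          refine (tsum_eq_sum fun j hj => ?_).symm
          have : n < j + 1 := by
            simp only [Finset.mem_range] at hj; omega
          rw [Ffun_zero (j+1) n this, mul_zero]
  have h3 : Tendsto (fun n => 1 + ∑' j : ℕ, (-1:ℝ)^(j+1) * Ffun γ (j+1) n) atTop
      (𝓝 (1 + ∑' j : ℕ, (-1:ℝ)^(j+1) * Aval γ (j+1))) := h1.const_add 1
  rw [h2] at h3
  exact h3.congr fun n => (hgoal n).symm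
end

section
/- Let $\gamma > 0$ and suppose $(H_t)_{t\geq 0}$ are nonnegative integer random variables such that for each $n$, with $\tau_n = \sum_{k=2}^n T_k$ for i.i.d. Exp(1) passage times $T_k$, the event $\{R_{\tau_n} = \{n\}\}$ (only vertex $n$ is red at time $\tau_n$) occurs for infinitely many $n$ almost surely, and suppose almost surely no reaching time $\tau_v$ coincides with any recovery completion time $\tau_w + \mathbf{C}_w$. Then almost surely $\liminf_{t\to\infty} H_t = 0$, where $H_t$ is the size of the longest red path at time $t$. -/
open MeasureTheory ProbabilityTheory Filter

/-- FPP with recovery on the semi-line: if almost surely, at infinitely many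
reaching times `τ n` the only red vertex is `n` itself, and no reaching time
coincides with a recovery completion time, then the length `H t` of the
longest red path satisfies `liminf_{t→∞} H t = 0` almost surely.
Here vertex `v ≥ 1` is red at time `t` iff `τ v ≤ t < τ v + C v`, and
`H t` is the largest `m` such that `m` consecutive vertices are all red. -/
theorem liminf_longest_red_path_zero
    {Ω : Type*} [MeasureSpace Ω] [IsProbabilityMeasure (ℙ : Measure Ω)]
    (T : ℕ → Ω → ℝ) (C : ℕ → Ω → ℝ)
    (hTmeas : ∀ k, Measurable (T k)) (hCmeas : ∀ j, Measurable (C j))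
    (hindep : iIndepFun
      (Sum.elim T C : ℕ ⊕ ℕ → Ω → ℝ) ℙ)
    (hTdist : ∀ k, Measure.map (T k) ℙ = expMeasure 1)
    (γ : ℝ) (hγ : 0 < γ)
    (hCdist : ∀ j, Measure.map (C j) ℙ = expMeasure γ)
    (τ : ℕ → Ω → ℝ) (hτ : ∀ n ω, τ n ω = ∑ k ∈ Finset.Icc 2 n, T k ω)
    (H : ℝ → Ω → ℕ)
    (hH : ∀ t ω, H t ω = sSup {m : ℕ | ∃ a : ℕ, 1 ≤ a ∧
      ∀ v ∈ Finset.Icc a (a + m - 1), τ v ω ≤ t ∧ t < τ v ω + C v ω})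
    (hio : ∀ᵐ ω ∂ℙ, ∃ᶠ n : ℕ in atTop, ∀ v : ℕ, 1 ≤ v →
      ((τ v ω ≤ τ n ω ∧ τ n ω < τ v ω + C v ω) ↔ v = n))
    (hnc : ∀ᵐ ω ∂ℙ, ∀ v : ℕ, 1 ≤ v → ∀ w : ℕ, 1 ≤ w →
      τ v ω ≠ τ w ω + C w ω) :
    ∀ᵐ ω ∂ℙ, Filter.liminf (fun t : ℝ => H t ω) atTop = 0 := by
  -- Almost surely all passage times are nonnegative.
  have hT0 : ∀ᵐ ω ∂ℙ, ∀ k, 0 ≤ T k ω := by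
    rw [ae_all_iff]
    intro k
    have hmap : ℙ (T k ⁻¹' Set.Iio (0 : ℝ)) = 0 := by
      have h1 : Measure.map (T k) ℙ (Set.Iio (0 : ℝ)) = ℙ (T k ⁻¹' Set.Iio (0 : ℝ)) :=
        Measure.map_apply (hTmeas k) measurableSet_Iio
      rw [hTdist k] at h1
      rw [← h1]
      show expMeasure 1 (Set.Iio (0 : ℝ)) = 0
      rw [expMeasure, gammaMeasure, withDensity_apply _ measurableSet_Iio]
      exact lintegral_gammaPDF_of_nonpos le_rfl
    filter_upwards [measure_eq_zero_iff_ae_notMem.mp hmap] with ω hω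
    simpa using hω
  filter_upwards [hio, hnc, hT0] with ω hioω hncω hT0ω
  -- τ is monotone in n
  have hmono : ∀ {m n : ℕ}, m ≤ n → τ m ω ≤ τ n ω := by
    intro m n hmn
    rw [hτ, hτ]
    exact Finset.sum_le_sum_of_subset_of_nonneg
      (Finset.Icc_subset_Icc_right hmn) (fun k _ _ => hT0ω k)
  -- good indices are unbounded
  have hgood : ∀ N : ℕ, ∃ n ≥ N, ∀ v : ℕ, 1 ≤ v →
      ((τ v ω ≤ τ n ω ∧ τ n ω < τ v ω + C v ω) ↔ v = n) :=
    frequently_atTop.mp hioω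
  -- key fact: for any B there is t ≥ B with no red vertex
  have key : ∀ B : ℝ, ∃ t ≥ B, H t ω = 0 := by
    intro B
    have hnored : ∃ t ≥ B, ∀ v : ℕ, 1 ≤ v → ¬(τ v ω ≤ t ∧ t < τ v ω + C v ω) := by
      by_cases hA : ∃ n, 1 ≤ n ∧ (∀ v : ℕ, 1 ≤ v →
          ((τ v ω ≤ τ n ω ∧ τ n ω < τ v ω + C v ω) ↔ v = n)) ∧ B < τ n ω
      · obtain ⟨n, hn1, hgn, hBn⟩ := hA
        set F := (Finset.Icc 1 n).filter (fun v => τ v ω + C v ω ≤ τ n ω) with hF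
        set s := F.fold max B (fun v => τ v ω + C v ω) with hs
        have hslt : s < τ n ω := by
          rw [hs, Finset.fold_max_lt]
          refine ⟨hBn, fun v hv => ?_⟩
          rw [hF, Finset.mem_filter, Finset.mem_Icc] at hv
          exact lt_of_le_of_ne hv.2 (Ne.symm (hncω n hn1 v hv.1.1))
        have hBs : B ≤ s := by
          rw [hs]; exact (Finset.le_fold_max _).mpr (Or.inl le_rfl)
        refine ⟨(s + τ n ω) / 2, by linarith, ?_⟩
        intro v hv1 hv
        have ht1 : s < (s + τ n ω) / 2 := by linarith
        have ht2 : (s + τ n ω) / 2 < τ n ω := by linarith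
        have hvn : v < n := by
          by_contra h
          push_neg at h
          exact absurd (le_trans (hmono h) hv.1) (not_le.mpr ht2)
        have hne : v ≠ n := Nat.ne_of_lt hvn
        have hvF : v ∈ F := by
          rw [hF, Finset.mem_filter, Finset.mem_Icc]
          have hle : τ v ω ≤ τ n ω := le_of_lt (lt_of_le_of_lt hv.1 ht2)
          have hnot : ¬(τ v ω ≤ τ n ω ∧ τ n ω < τ v ω + C v ω) :=
            fun h => hne ((hgn v hv1).mp h)
          push_neg at hnot
          exact ⟨⟨hv1, le_of_lt hvn⟩, hnot hle⟩
        have hends : τ v ω + C v ω ≤ s := by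
          rw [hs]; exact (Finset.le_fold_max _).mpr (Or.inr ⟨v, hvF, le_rfl⟩)
        linarith [hv.2]
      · push_neg at hA
        refine ⟨B + 1, by linarith, ?_⟩
        intro v hv1 hv
        obtain ⟨m, hm, hgm⟩ := hgood (v + 1)
        have hm1 : 1 ≤ m := by omega
        have hτm : τ m ω ≤ B := hA m hm1 hgm
        have hvm : v ≠ m := by omega
        have hnot : ¬(τ v ω ≤ τ m ω ∧ τ m ω < τ v ω + C v ω) :=
          fun h => hvm ((hgm v hv1).mp h)
        push_neg at hnot
        have hle : τ v ω + C v ω ≤ τ m ω := hnot (hmono (by omega))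
        linarith [hv.1, hv.2]
    obtain ⟨t, htB, hno⟩ := hnored
    refine ⟨t, htB, ?_⟩
    rw [hH]
    have hset : {m : ℕ | ∃ a : ℕ, 1 ≤ a ∧
        ∀ v ∈ Finset.Icc a (a + m - 1), τ v ω ≤ t ∧ t < τ v ω + C v ω} = {0} := by
      apply Set.eq_singleton_iff_unique_mem.mpr
      constructor
      · exact ⟨1, le_rfl, by simp⟩
      · rintro m ⟨a, ha1, hred⟩
        by_contra hm
        have hmem : a ∈ Finset.Icc a (a + m - 1) := Finset.mem_Icc.mpr ⟨le_rfl, by omega⟩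
        exact hno a ha1 (hred a hmem)
    rw [hset, csSup_singleton]
  -- conclude about liminf
  have hfreq : ∃ᶠ t : ℝ in atTop, H t ω ≤ 0 := by
    rw [frequently_atTop]
    intro B
    obtain ⟨t, htB, ht0⟩ := key B
    exact ⟨t, htB, le_of_eq ht0⟩
  exact Nat.le_zero.mp (liminf_le_of_frequently_le hfreq
    ⟨0, Filter.eventually_map.mpr (Filter.Eventually.of_forall fun t => Nat.zero_le _)⟩)
end
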